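/- A mixed graph is a relation web if and only if it can be constructed from single-vertex graphs using the three operations ⅋, ◁ and ⊗. -/

import Mathlib

/-! # Formulas of multiplicative exponential linear logic with the placeholder `∘` -/

inductive Formula where
  | atom  : ℕ → Formula
  | natom : ℕ → Formula
  | parr  : Formula → Formula → Formula
  | tens  : Formula → Formula → Formula
  | bang  : Formula → Formula
  | quest : Formula → Formula
  | bot   : Formula
  | one   : Formula
  | hole  : Formula
  deriving DecidableEq

namespace Formula

/-- A MELL-formula: a formula with no occurrence of the placeholder `∘`. -/
def isMELL : Formula → Prop
  | atom _   => True
  | natom _  => True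
  | parr A B => isMELL A ∧ isMELL B
  | tens A B => isMELL A ∧ isMELL B
  | bang A   => isMELL A
  | quest A  => isMELL A
  | bot      => True
  | one      => True
  | hole     => False

/-- A formula without modalities (no `!` and no `?`). -/
def noMod : Formula → Prop
  | atom _   => True
  | natom _  => True
  | parr A B => noMod A ∧ noMod B
  | tens A B => noMod A ∧ noMod B
  | bang _   => False
  | quest _  => False
  | bot      => True
  | one      => True
  | hole     => True

/-- A formula of multiplicative linear logic with units:
built from atoms, dual atoms, `⊗`, `⅋`, `1`, `⊥`; no `∘`, `!`, `?`. -/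
def isMLLu : Formula → Prop
  | atom _   => True
  | natom _  => True
  | parr A B => isMLLu A ∧ isMLLu B
  | tens A B => isMLLu A ∧ isMLLu B
  | bang _   => False
  | quest _  => False
  | bot      => True
  | one      => True
  | hole     => False

/-- Linear negation, defined through the De Morgan laws. -/
def dual : Formula → Formula
  | atom a   => natom a
  | natom a  => atom a
  | parr A B => tens (dual A) (dual B)
  | tens A B => parr (dual A) (dual B)
  | bang A   => quest (dual A)
  | quest A  => bang (dual A)
  | bot      => one
  | one      => bot
  | hole     => hole

/-- `questN n F` is `?ⁿ F`. -/
def questN : ℕ → Formula → Formula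
  | 0,     A => A
  | n + 1, A => quest (questN n A)

/-- A weaken-contradiction: a formula `?ⁿ(A ⊗ Ā)` with `A` a MELL-formula. -/
def isWeakenContradiction (C : Formula) : Prop :=
  ∃ (n : ℕ) (A : Formula), A.isMELL ∧ C = questN n (tens A (dual A))

end Formula

/-- A sequent is a (non-empty) multiset of formulas. -/
abbrev Sequent := Multiset Formula

/-! ## Sequent systems -/

/-- The system MLL = {ax, ⊗, ⅋} (it coincides with the linear system MLLˡ). -/
inductive ProvMLL : Sequent → Prop
  | ax (a : ℕ) : ProvMLL {Formula.atom a, Formula.natom a}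
  | parr (Γ : Sequent) (A B : Formula) :
      ProvMLL (A ::ₘ B ::ₘ Γ) → ProvMLL (Formula.parr A B ::ₘ Γ)
  | tens (Γ Δ : Sequent) (A B : Formula) :
      ProvMLL (A ::ₘ Γ) → ProvMLL (B ::ₘ Δ) →
      ProvMLL (Formula.tens A B ::ₘ (Γ + Δ))

/-- The system MLLu = {ax, ⊗, ⅋, ⊥, 1}. -/
inductive ProvMLLu : Sequent → Prop
  | ax (a : ℕ) : ProvMLLu {Formula.atom a, Formula.natom a}
  | parr (Γ : Sequent) (A B : Formula) :
      ProvMLLu (A ::ₘ B ::ₘ Γ) → ProvMLLu (Formula.parr A B ::ₘ Γ)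
  | tens (Γ Δ : Sequent) (A B : Formula) :
      ProvMLLu (A ::ₘ Γ) → ProvMLLu (B ::ₘ Δ) →
      ProvMLLu (Formula.tens A B ::ₘ (Γ + Δ))
  | bot (Γ : Sequent) : ProvMLLu Γ → ProvMLLu (Formula.bot ::ₘ Γ)
  | one : ProvMLLu {Formula.one}

/-- The system MELL = {ax, ⊗, ⅋, ⊥, 1, !p, der, w?, c?}. -/
inductive ProvMELL : Sequent → Prop
  | ax (a : ℕ) : ProvMELL {Formula.atom a, Formula.natom a}
  | parr (Γ : Sequent) (A B : Formula) :
      ProvMELL (A ::ₘ B ::ₘ Γ) → ProvMELL (Formula.parr A B ::ₘ Γ)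
  | tens (Γ Δ : Sequent) (A B : Formula) :
      ProvMELL (A ::ₘ Γ) → ProvMELL (B ::ₘ Δ) →
      ProvMELL (Formula.tens A B ::ₘ (Γ + Δ))
  | bot (Γ : Sequent) : ProvMELL Γ → ProvMELL (Formula.bot ::ₘ Γ)
  | one : ProvMELL {Formula.one}
  | prom (Γ : Sequent) (A : Formula) :
      ProvMELL (A ::ₘ Γ.map Formula.quest) →
      ProvMELL (Formula.bang A ::ₘ Γ.map Formula.quest)
  | der (Γ : Sequent) (A : Formula) :
      ProvMELL (A ::ₘ Γ) → ProvMELL (Formula.quest A ::ₘ Γ)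
  | weak (Γ : Sequent) (A : Formula) :
      ProvMELL Γ → ProvMELL (Formula.quest A ::ₘ Γ)
  | contr (Γ : Sequent) (A : Formula) :
      ProvMELL (Formula.quest A ::ₘ Formula.quest A ::ₘ Γ) →
      ProvMELL (Formula.quest A ::ₘ Γ)

/-- The system MLLu^j = {ax_j, 1_j, ⊥^j, ⅋, ⊗}. -/
inductive ProvMLLuj : Sequent → Prop
  | axj (a n : ℕ) :
      ProvMLLuj (Formula.atom a ::ₘ Formula.natom a ::ₘ Multiset.replicate n Formula.hole)
  | onej (n : ℕ) : ProvMLLuj (Formula.one ::ₘ Multiset.replicate n Formula.hole)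
  | botj (Γ : Sequent) :
      ProvMLLuj (Formula.hole ::ₘ Γ) → ProvMLLuj (Formula.bot ::ₘ Γ)
  | parr (Γ : Sequent) (A B : Formula) :
      ProvMLLuj (A ::ₘ B ::ₘ Γ) → ProvMLLuj (Formula.parr A B ::ₘ Γ)
  | tens (Γ Δ : Sequent) (A B : Formula) :
      ProvMLLuj (A ::ₘ Γ) → ProvMLLuj (B ::ₘ Δ) →
      ProvMLLuj (Formula.tens A B ::ₘ (Γ + Δ))

/-- The system MELL^j = {ax_j, 1_j, ⊥^j, w^j, ⅋, ⊗, w!p, der, dig?, dig∘, c?}. -/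
inductive ProvMELLj : Sequent → Prop
  | axj (a n : ℕ) :
      ProvMELLj (Formula.atom a ::ₘ Formula.natom a ::ₘ Multiset.replicate n Formula.hole)
  | onej (n : ℕ) : ProvMELLj (Formula.one ::ₘ Multiset.replicate n Formula.hole)
  | botj (Γ : Sequent) :
      ProvMELLj (Formula.hole ::ₘ Γ) → ProvMELLj (Formula.bot ::ₘ Γ)
  | wj (Γ : Sequent) (A : Formula) :
      ProvMELLj (Formula.hole ::ₘ Γ) → ProvMELLj (Formula.quest A ::ₘ Γ)
  | parr (Γ : Sequent) (A B : Formula) :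
      ProvMELLj (A ::ₘ B ::ₘ Γ) → ProvMELLj (Formula.parr A B ::ₘ Γ)
  | tens (Γ Δ : Sequent) (A B : Formula) :
      ProvMELLj (A ::ₘ Γ) → ProvMELLj (B ::ₘ Δ) →
      ProvMELLj (Formula.tens A B ::ₘ (Γ + Δ))
  | wprom (Γ : Sequent) (A : Formula) :
      ProvMELLj (A ::ₘ Γ) → ProvMELLj (Formula.bang A ::ₘ Γ.map Formula.quest)
  | der (Γ : Sequent) (A : Formula) :
      ProvMELLj (A ::ₘ Γ) → ProvMELLj (Formula.quest A ::ₘ Γ)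
  | dig (Γ : Sequent) (A : Formula) :
      ProvMELLj (Formula.quest (Formula.quest A) ::ₘ Γ) →
      ProvMELLj (Formula.quest A ::ₘ Γ)
  | digo (Γ : Sequent) :
      ProvMELLj (Formula.quest Formula.hole ::ₘ Γ) → ProvMELLj (Formula.hole ::ₘ Γ)
  | contr (Γ : Sequent) (A : Formula) :
      ProvMELLj (Formula.quest A ::ₘ Formula.quest A ::ₘ Γ) →
      ProvMELLj (Formula.quest A ::ₘ Γ)

/-- The system MELL^j extended with the cut rule (cut formulas are MELL-formulas). -/
inductive ProvMELLjCut : Sequent → Prop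
  | axj (a n : ℕ) :
      ProvMELLjCut (Formula.atom a ::ₘ Formula.natom a ::ₘ Multiset.replicate n Formula.hole)
  | onej (n : ℕ) : ProvMELLjCut (Formula.one ::ₘ Multiset.replicate n Formula.hole)
  | botj (Γ : Sequent) :
      ProvMELLjCut (Formula.hole ::ₘ Γ) → ProvMELLjCut (Formula.bot ::ₘ Γ)
  | wj (Γ : Sequent) (A : Formula) :
      ProvMELLjCut (Formula.hole ::ₘ Γ) → ProvMELLjCut (Formula.quest A ::ₘ Γ)
  | parr (Γ : Sequent) (A B : Formula) :
      ProvMELLjCut (A ::ₘ B ::ₘ Γ) → ProvMELLjCut (Formula.parr A B ::ₘ Γ)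
  | tens (Γ Δ : Sequent) (A B : Formula) :
      ProvMELLjCut (A ::ₘ Γ) → ProvMELLjCut (B ::ₘ Δ) →
      ProvMELLjCut (Formula.tens A B ::ₘ (Γ + Δ))
  | wprom (Γ : Sequent) (A : Formula) :
      ProvMELLjCut (A ::ₘ Γ) → ProvMELLjCut (Formula.bang A ::ₘ Γ.map Formula.quest)
  | der (Γ : Sequent) (A : Formula) :
      ProvMELLjCut (A ::ₘ Γ) → ProvMELLjCut (Formula.quest A ::ₘ Γ)
  | dig (Γ : Sequent) (A : Formula) :
      ProvMELLjCut (Formula.quest (Formula.quest A) ::ₘ Γ) →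
      ProvMELLjCut (Formula.quest A ::ₘ Γ)
  | digo (Γ : Sequent) :
      ProvMELLjCut (Formula.quest Formula.hole ::ₘ Γ) → ProvMELLjCut (Formula.hole ::ₘ Γ)
  | contr (Γ : Sequent) (A : Formula) :
      ProvMELLjCut (Formula.quest A ::ₘ Formula.quest A ::ₘ Γ) →
      ProvMELLjCut (Formula.quest A ::ₘ Γ)
  | cut (Γ Δ : Sequent) (A : Formula) :
      A.isMELL → ProvMELLjCut (A ::ₘ Γ) → ProvMELLjCut (A.dual ::ₘ Δ) →
      ProvMELLjCut (Γ + Δ)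

/-- The linear system MLLu^ℓ = {ax_j, 1_j, ⅋, ⊗}. -/
inductive ProvMLLuLin : Sequent → Prop
  | axj (a n : ℕ) :
      ProvMLLuLin (Formula.atom a ::ₘ Formula.natom a ::ₘ Multiset.replicate n Formula.hole)
  | onej (n : ℕ) : ProvMLLuLin (Formula.one ::ₘ Multiset.replicate n Formula.hole)
  | parr (Γ : Sequent) (A B : Formula) :
      ProvMLLuLin (A ::ₘ B ::ₘ Γ) → ProvMLLuLin (Formula.parr A B ::ₘ Γ)
  | tens (Γ Δ : Sequent) (A B : Formula) :
      ProvMLLuLin (A ::ₘ Γ) → ProvMLLuLin (B ::ₘ Δ) →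
      ProvMLLuLin (Formula.tens A B ::ₘ (Γ + Δ))

/-- The linear system MELL^ℓ = {ax_j, 1_j, ⅋, ⊗, w!p}. -/
inductive ProvMELLLin : Sequent → Prop
  | axj (a n : ℕ) :
      ProvMELLLin (Formula.atom a ::ₘ Formula.natom a ::ₘ Multiset.replicate n Formula.hole)
  | onej (n : ℕ) : ProvMELLLin (Formula.one ::ₘ Multiset.replicate n Formula.hole)
  | parr (Γ : Sequent) (A B : Formula) :
      ProvMELLLin (A ::ₘ B ::ₘ Γ) → ProvMELLLin (Formula.parr A B ::ₘ Γ)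
  | tens (Γ Δ : Sequent) (A B : Formula) :
      ProvMELLLin (A ::ₘ Γ) → ProvMELLLin (B ::ₘ Δ) →
      ProvMELLLin (Formula.tens A B ::ₘ (Γ + Δ))
  | wprom (Γ : Sequent) (A : Formula) :
      ProvMELLLin (A ::ₘ Γ) → ProvMELLLin (Formula.bang A ::ₘ Γ.map Formula.quest)

/-- MELL with the cut rule, recording the list of active cut formulas of the derivation. -/
inductive ProvMELLCutL : Sequent → List Formula → Prop
  | ax (a : ℕ) : ProvMELLCutL {Formula.atom a, Formula.natom a} []
  | parr (Γ : Sequent) (A B : Formula) (L : List Formula) :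
      ProvMELLCutL (A ::ₘ B ::ₘ Γ) L → ProvMELLCutL (Formula.parr A B ::ₘ Γ) L
  | tens (Γ Δ : Sequent) (A B : Formula) (L₁ L₂ : List Formula) :
      ProvMELLCutL (A ::ₘ Γ) L₁ → ProvMELLCutL (B ::ₘ Δ) L₂ →
      ProvMELLCutL (Formula.tens A B ::ₘ (Γ + Δ)) (L₁ ++ L₂)
  | bot (Γ : Sequent) (L : List Formula) :
      ProvMELLCutL Γ L → ProvMELLCutL (Formula.bot ::ₘ Γ) L
  | one : ProvMELLCutL {Formula.one} []
  | prom (Γ : Sequent) (A : Formula) (L : List Formula) :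
      ProvMELLCutL (A ::ₘ Γ.map Formula.quest) L →
      ProvMELLCutL (Formula.bang A ::ₘ Γ.map Formula.quest) L
  | der (Γ : Sequent) (A : Formula) (L : List Formula) :
      ProvMELLCutL (A ::ₘ Γ) L → ProvMELLCutL (Formula.quest A ::ₘ Γ) L
  | weak (Γ : Sequent) (A : Formula) (L : List Formula) :
      ProvMELLCutL Γ L → ProvMELLCutL (Formula.quest A ::ₘ Γ) L
  | contr (Γ : Sequent) (A : Formula) (L : List Formula) :
      ProvMELLCutL (Formula.quest A ::ₘ Formula.quest A ::ₘ Γ) L →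
      ProvMELLCutL (Formula.quest A ::ₘ Γ) L
  | cut (Γ Δ : Sequent) (A : Formula) (L₁ L₂ : List Formula) :
      A.isMELL → ProvMELLCutL (A ::ₘ Γ) L₁ → ProvMELLCutL (A.dual ::ₘ Δ) L₂ →
      ProvMELLCutL (Γ + Δ) (A :: (L₁ ++ L₂))

/-! ## Deep inference rewriting -/

/-- Closure of a rewrite relation under arbitrary formula contexts. -/
inductive Deep (r : Formula → Formula → Prop) : Formula → Formula → Prop
  | base {A B : Formula} : r A B → Deep r A B
  | parrL {A A' : Formula} (B : Formula) :
      Deep r A A' → Deep r (Formula.parr A B) (Formula.parr A' B)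
  | parrR (A : Formula) {B B' : Formula} :
      Deep r B B' → Deep r (Formula.parr A B) (Formula.parr A B')
  | tensL {A A' : Formula} (B : Formula) :
      Deep r A A' → Deep r (Formula.tens A B) (Formula.tens A' B)
  | tensR (A : Formula) {B B' : Formula} :
      Deep r B B' → Deep r (Formula.tens A B) (Formula.tens A B')
  | bang {A A' : Formula} : Deep r A A' → Deep r (Formula.bang A) (Formula.bang A')
  | quest {A A' : Formula} : Deep r A A' → Deep r (Formula.quest A) (Formula.quest A')

/-- Base steps of all the deep-MELL rules:
deep dereliction, deep digging, deep ∘-digging, deep ⊥, deep weakening, deep contraction. -/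
inductive DeepMELLBase : Formula → Formula → Prop
  | der (A : Formula) : DeepMELLBase A (Formula.quest A)
  | dig (A : Formula) :
      DeepMELLBase (Formula.quest (Formula.quest A)) (Formula.quest A)
  | digHole : DeepMELLBase (Formula.quest Formula.hole) Formula.hole
  | bot : DeepMELLBase Formula.hole Formula.bot
  | weak (A : Formula) : DeepMELLBase Formula.hole (Formula.quest A)
  | contr (A : Formula) :
      DeepMELLBase (Formula.parr (Formula.quest A) (Formula.quest A)) (Formula.quest A)

/-- Base steps of deep dereliction, deep digging and deep ∘-digging. -/
inductive DigBase : Formula → Formula → Prop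
  | der (A : Formula) : DigBase A (Formula.quest A)
  | dig (A : Formula) : DigBase (Formula.quest (Formula.quest A)) (Formula.quest A)
  | digHole : DigBase (Formula.quest Formula.hole) Formula.hole

/-- Base steps of deep weakening and deep ⊥. -/
inductive WeakBase : Formula → Formula → Prop
  | bot : WeakBase Formula.hole Formula.bot
  | weak (A : Formula) : WeakBase Formula.hole (Formula.quest A)

/-- Base step of deep contraction. -/
inductive ContrBase : Formula → Formula → Prop
  | contr (A : Formula) :
      ContrBase (Formula.parr (Formula.quest A) (Formula.quest A)) (Formula.quest A)

/-- Base steps of deep ⊥, deep weakening, deep ?-contraction, deep ∘-contraction,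
and the deep associativity-commutativity rules. -/
inductive WCACBase : Formula → Formula → Prop
  | bot : WCACBase Formula.hole Formula.bot
  | weak (A : Formula) : WCACBase Formula.hole (Formula.quest A)
  | contr (A : Formula) :
      WCACBase (Formula.parr (Formula.quest A) (Formula.quest A)) (Formula.quest A)
  | contrHole :
      WCACBase (Formula.parr Formula.hole Formula.hole) Formula.hole
  | tensAssoc (A B C : Formula) :
      WCACBase (Formula.tens (Formula.tens A B) C) (Formula.tens A (Formula.tens B C))
  | parrAssoc (A B C : Formula) :
      WCACBase (Formula.parr (Formula.parr A B) C) (Formula.parr A (Formula.parr B C))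
  | tensComm (A B : Formula) : WCACBase (Formula.tens A B) (Formula.tens B A)
  | parrComm (A B : Formula) : WCACBase (Formula.parr A B) (Formula.parr B A)

/-- One deep rewriting step inside a sequent: rewrite one member of the multiset. -/
def SeqStep (r : Formula → Formula → Prop) (Γ Γ' : Sequent) : Prop :=
  ∃ (A A' : Formula) (Δ : Sequent), Deep r A A' ∧ Γ = A ::ₘ Δ ∧ Γ' = A' ::ₘ Δ

/-- Derivability between sequents by a finite sequence of deep rewriting steps. -/
def SeqDeriv (r : Formula → Formula → Prop) : Sequent → Sequent → Prop :=
  Relation.ReflTransGen (SeqStep r)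

/-- Derivability between formulas by a finite sequence of deep rewriting steps. -/
def FormDeriv (r : Formula → Formula → Prop) : Formula → Formula → Prop :=
  Relation.ReflTransGen (Deep r)

/-- Equivalence of formulas modulo associativity and commutativity of ⊗ and ⅋. -/
inductive ACEq : Formula → Formula → Prop
  | refl (A : Formula) : ACEq A A
  | symm {A B : Formula} : ACEq A B → ACEq B A
  | trans {A B C : Formula} : ACEq A B → ACEq B C → ACEq A C
  | tensAssoc (A B C : Formula) :
      ACEq (Formula.tens (Formula.tens A B) C) (Formula.tens A (Formula.tens B C))
  | parrAssoc (A B C : Formula) :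
      ACEq (Formula.parr (Formula.parr A B) C) (Formula.parr A (Formula.parr B C))
  | tensComm (A B : Formula) : ACEq (Formula.tens A B) (Formula.tens B A)
  | parrComm (A B : Formula) : ACEq (Formula.parr A B) (Formula.parr B A)
  | tensCongr {A A' B B' : Formula} :
      ACEq A A' → ACEq B B' → ACEq (Formula.tens A B) (Formula.tens A' B')
  | parrCongr {A A' B B' : Formula} :
      ACEq A A' → ACEq B B' → ACEq (Formula.parr A B) (Formula.parr A' B')
  | bangCongr {A A' : Formula} : ACEq A A' → ACEq (Formula.bang A) (Formula.bang A')
  | questCongr {A A' : Formula} : ACEq A A' → ACEq (Formula.quest A) (Formula.quest A')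

/-! ## Mixed graphs and relation webs -/

/-- A mixed graph: a finite set of vertices from `ℕ`, an undirected edge relation `R`
and a directed edge relation `lt`. -/
structure MGraph where
  verts : Finset ℕ
  R : ℕ → ℕ → Prop
  lt : ℕ → ℕ → Prop

namespace MGraph

/-- The axioms of mixed graphs: `R` symmetric and irreflexive, `lt` irreflexive,
`R ∩ lt = ∅`, and all edges between vertices. -/
def IsMixed (G : MGraph) : Prop :=
  (∀ u v, G.R u v → G.R v u) ∧
  (∀ v, ¬ G.R v v) ∧
  (∀ v, ¬ G.lt v v) ∧
  (∀ u v, ¬ (G.R u v ∧ G.lt u v)) ∧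
  (∀ u v, G.R u v → u ∈ G.verts ∧ v ∈ G.verts) ∧
  (∀ u v, G.lt u v → u ∈ G.verts ∧ v ∈ G.verts)

/-- `u` and `v` are joined by no edge at all. -/
def noEdge (G : MGraph) (u v : ℕ) : Prop :=
  ¬ G.R u v ∧ ¬ G.R v u ∧ ¬ G.lt u v ∧ ¬ G.lt v u

/-- A relation web: a non-empty mixed graph with `lt` transitive, `(V,R)` a cograph
(no induced P₄), `(V,lt)` a series-parallel order (no induced N), and no induced
3-color triangle. -/
def IsRelWeb (G : MGraph) : Prop :=
  G.IsMixed ∧ G.verts.Nonempty ∧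
  (∀ u v w, G.lt u v → G.lt v w → G.lt u w) ∧
  (¬ ∃ w x y z, w ∈ G.verts ∧ x ∈ G.verts ∧ y ∈ G.verts ∧ z ∈ G.verts ∧
      w ≠ x ∧ w ≠ y ∧ w ≠ z ∧ x ≠ y ∧ x ≠ z ∧ y ≠ z ∧
      G.R w x ∧ G.R x y ∧ G.R y z ∧ ¬ G.R w y ∧ ¬ G.R w z ∧ ¬ G.R x z) ∧
  (¬ ∃ u v y z, u ∈ G.verts ∧ v ∈ G.verts ∧ y ∈ G.verts ∧ z ∈ G.verts ∧
      u ≠ v ∧ u ≠ y ∧ u ≠ z ∧ v ≠ y ∧ v ≠ z ∧ y ≠ z ∧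
      G.lt u v ∧ G.lt y v ∧ G.lt y z ∧
      ¬ G.lt u y ∧ ¬ G.lt y u ∧ ¬ G.lt u z ∧ ¬ G.lt z u ∧ ¬ G.lt v z ∧ ¬ G.lt z v) ∧
  (¬ ∃ u w v, u ∈ G.verts ∧ w ∈ G.verts ∧ v ∈ G.verts ∧
      u ≠ w ∧ u ≠ v ∧ w ≠ v ∧
      G.noEdge u w ∧ G.R w v ∧ (G.lt u v ∨ G.lt v u))

/-- `G ⅋ H`: disjoint union. -/
def uparr (G H : MGraph) : MGraph where
  verts := G.verts ∪ H.verts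
  R := fun u v => G.R u v ∨ H.R u v
  lt := fun u v => G.lt u v ∨ H.lt u v

/-- `G ⊗ H`: disjoint union plus all undirected edges between `G` and `H`. -/
def utens (G H : MGraph) : MGraph where
  verts := G.verts ∪ H.verts
  R := fun u v => G.R u v ∨ H.R u v ∨
    (u ∈ G.verts ∧ v ∈ H.verts) ∨ (u ∈ H.verts ∧ v ∈ G.verts)
  lt := fun u v => G.lt u v ∨ H.lt u v

/-- `G ◁ H`: disjoint union plus all directed edges from `G` to `H`. -/
def useq (G H : MGraph) : MGraph where
  verts := G.verts ∪ H.verts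
  R := fun u v => G.R u v ∨ H.R u v
  lt := fun u v => G.lt u v ∨ H.lt u v ∨ (u ∈ G.verts ∧ v ∈ H.verts)

/-- Graphs constructible from single vertices using `⅋`, `◁` and `⊗`
(applied to disjoint graphs). -/
inductive Constructible : MGraph → Prop
  | single (n : ℕ) :
      Constructible ⟨{n}, fun _ _ => False, fun _ _ => False⟩
  | parr {G H : MGraph} : Constructible G → Constructible H →
      Disjoint G.verts H.verts → Constructible (uparr G H)
  | tens {G H : MGraph} : Constructible G → Constructible H →
      Disjoint G.verts H.verts → Constructible (utens G H)
  | seq {G H : MGraph} : Constructible G → Constructible H →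
      Disjoint G.verts H.verts → Constructible (useq G H)

end MGraph

/-! ## Labeled graphs and the translation of formulas -/

/-- Vertex labels: atoms, dual atoms, `!`, `?`, `1`, `⊥`, `∘`. -/
inductive GLabel where
  | atom  : ℕ → GLabel
  | natom : ℕ → GLabel
  | bang  : GLabel
  | quest : GLabel
  | one   : GLabel
  | bot   : GLabel
  | hole  : GLabel
  deriving DecidableEq

/-- Atomic labels (atoms or dual atoms). -/
def GLabel.isAtom : GLabel → Prop
  | .atom _  => True
  | .natom _ => True
  | _        => False

/-- A labeled mixed graph. -/
structure LabGraph extends MGraph where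
  lab : ℕ → GLabel

namespace LabGraph

/-- A labeled graph is a relation web when its underlying mixed graph is. -/
def IsWeb (G : LabGraph) : Prop := G.toMGraph.IsRelWeb

/-- Properly labeled: a vertex has an outgoing `lt`-edge iff its label is `!` or `?`. -/
def ProperlyLabeled (G : LabGraph) : Prop :=
  ∀ v ∈ G.verts, (∃ w, G.lt v w) ↔ (G.lab v = GLabel.bang ∨ G.lab v = GLabel.quest)

/-- Modal: properly labeled, and vertices with `lt`-edges to a common target are
`lt`-comparable. -/
def IsModalLab (G : LabGraph) : Prop :=
  G.ProperlyLabeled ∧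
  ∀ u v w, u ∈ G.verts → v ∈ G.verts → w ∈ G.verts →
    G.lt u w → G.lt v w → u ≠ v → (G.lt u v ∨ G.lt v u)

/-- A (labeled) modal relation web. -/
def IsModalWeb (G : LabGraph) : Prop := G.IsWeb ∧ G.IsModalLab

/-- The single-vertex labeled graph. -/
def point (l : GLabel) : LabGraph where
  verts := {0}
  R := fun _ _ => False
  lt := fun _ _ => False
  lab := fun _ => l

/-- `G ⅋ H` on labeled graphs, with vertices renamed evenly/oddly so as to be disjoint. -/
def gparr (G H : LabGraph) : LabGraph where
  verts := G.verts.image (fun n => 2 * n) ∪ H.verts.image (fun n => 2 * n + 1)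
  R := fun u v =>
    (u % 2 = 0 ∧ v % 2 = 0 ∧ G.R (u / 2) (v / 2)) ∨
    (u % 2 = 1 ∧ v % 2 = 1 ∧ H.R (u / 2) (v / 2))
  lt := fun u v =>
    (u % 2 = 0 ∧ v % 2 = 0 ∧ G.lt (u / 2) (v / 2)) ∨
    (u % 2 = 1 ∧ v % 2 = 1 ∧ H.lt (u / 2) (v / 2))
  lab := fun n => if n % 2 = 0 then G.lab (n / 2) else H.lab (n / 2)

/-- `G ⊗ H` on labeled graphs. -/
def gtens (G H : LabGraph) : LabGraph where
  verts := (gparr G H).verts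
  R := fun u v => (gparr G H).R u v ∨
    (u % 2 = 0 ∧ v % 2 = 1 ∧ u / 2 ∈ G.verts ∧ v / 2 ∈ H.verts) ∨
    (u % 2 = 1 ∧ v % 2 = 0 ∧ u / 2 ∈ H.verts ∧ v / 2 ∈ G.verts)
  lt := (gparr G H).lt
  lab := (gparr G H).lab

/-- `G ◁ H` on labeled graphs. -/
def gseq (G H : LabGraph) : LabGraph where
  verts := (gparr G H).verts
  R := (gparr G H).R
  lt := fun u v => (gparr G H).lt u v ∨
    (u % 2 = 0 ∧ v % 2 = 1 ∧ u / 2 ∈ G.verts ∧ v / 2 ∈ H.verts)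
  lab := (gparr G H).lab

/-- The translation `⟦·⟧` of formulas into labeled graphs. -/
def trans : Formula → LabGraph
  | .atom a  => point (.atom a)
  | .natom a => point (.natom a)
  | .one     => point .one
  | .bot     => point .bot
  | .hole    => point .hole
  | .parr A B => gparr (trans A) (trans B)
  | .tens A B => gtens (trans A) (trans B)
  | .bang A  => gseq (point .bang) (trans A)
  | .quest A => gseq (point .quest) (trans A)

/-- The translation of a sequent (represented as a non-empty list): `⅋` of the members. -/
def transSeq : List Formula → LabGraph
  | [] => point .hole
  | [A] => trans A
  | A :: B :: Γ => gparr (trans A) (transSeq (B :: Γ))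

/-- Isomorphism of labeled mixed graphs. -/
def Iso (G H : LabGraph) : Prop :=
  ∃ f : ℕ → ℕ, Set.BijOn f ↑G.verts ↑H.verts ∧
    (∀ u ∈ G.verts, ∀ v ∈ G.verts,
      (G.R u v ↔ H.R (f u) (f v)) ∧ (G.lt u v ↔ H.lt (f u) (f v))) ∧
    (∀ v ∈ G.verts, H.lab (f v) = G.lab v)

end LabGraph

/-! ## RGB-cographs -/

/-- An RGB-cograph: a labeled graph together with a linking relation. -/
structure RGB extends LabGraph where
  link : ℕ → ℕ → Prop

namespace RGB

/-- The conditions for being an RGB-cograph. -/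
def IsRGB (G : RGB) : Prop :=
  G.toLabGraph.IsModalWeb ∧
  (∀ v ∈ G.verts, G.link v v) ∧
  (∀ u v, G.link u v → G.link v u) ∧
  (∀ u v w, G.link u v → G.link v w → G.link u w) ∧
  (∀ u v, G.link u v → u ∈ G.verts ∧ v ∈ G.verts) ∧
  (∀ v ∈ G.verts, (G.lab v).isAtom →
      ∃! w, w ≠ v ∧ G.link v w ∧ (G.lab w).isAtom) ∧
  (∀ v ∈ G.verts, G.lab v = GLabel.one →
      ∀ w, G.link v w → w ≠ v → G.lab w = GLabel.hole) ∧
  (∀ v ∈ G.verts, G.lab v = GLabel.hole →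
      ∃ w, G.link v w ∧ ((G.lab w).isAtom ∨ G.lab w = GLabel.one)) ∧
  (∀ v ∈ G.verts, (G.lab v = GLabel.bang ∨ G.lab v = GLabel.quest) →
      (∃! w, G.link v w ∧ G.lab w = GLabel.bang) ∧
      (∀ w, G.link v w → G.lab w ≠ GLabel.hole))

/-- Adjacency by an `R`- or `lt`-edge (in either direction). -/
def rlAdj (G : RGB) (u v : ℕ) : Prop :=
  G.R u v ∨ G.R v u ∨ G.lt u v ∨ G.lt v u

/-- Adjacency by a linking edge. -/
def lkAdj (G : RGB) (u v : ℕ) : Prop := G.link u v ∧ u ≠ v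

/-- A single step of an alternating path; `true` = linking edge, `false` = R/lt edge. -/
def aeStep (G : RGB) : Bool → ℕ → ℕ → Prop
  | true,  u, v => G.lkAdj u v
  | false, u, v => G.rlAdj u v

/-- The edges of the list alternate, starting with an edge of kind `b`. -/
def AltChain (G : RGB) : Bool → List ℕ → Prop
  | _, [] => True
  | _, [_] => True
  | b, u :: v :: l => G.aeStep b u v ∧ AltChain G (!b) (v :: l)

/-- An æ-path: a non-empty elementary alternating path on vertices of `G`. -/
def IsAEPath (G : RGB) (l : List ℕ) : Prop :=
  l ≠ [] ∧ l.Nodup ∧ (∀ v ∈ l, v ∈ G.verts) ∧ ∃ b, G.AltChain b l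

/-- A path is chordless if no `R`/`lt` edge joins two non-consecutive vertices. -/
def Chordless (G : RGB) (l : List ℕ) : Prop :=
  ∀ (i j : ℕ) (hi : i < l.length) (hj : j < l.length), i + 2 ≤ j →
    ¬ G.rlAdj (l.get ⟨i, hi⟩) (l.get ⟨j, hj⟩)

/-- æ-connectedness: any two vertices are joined by a chordless æ-path. -/
def AEConnected (G : RGB) : Prop :=
  ∀ u ∈ G.verts, ∀ v ∈ G.verts,
    ∃ l, G.IsAEPath l ∧ G.Chordless l ∧ l.head? = some u ∧ l.getLast? = some v

/-- An æ-cycle, represented by the list of its (distinct) vertices; the closing edge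
returns to the first vertex and the number of edges is even so that alternation closes. -/
def IsAECycle (G : RGB) (l : List ℕ) : Prop :=
  2 ≤ l.length ∧ l.length % 2 = 0 ∧ l.Nodup ∧ (∀ v ∈ l, v ∈ G.verts) ∧
  ∃ b, G.AltChain b (l ++ [l.headI])

/-- Chordlessness for cycles: no `R`/`lt` edge between cyclically non-consecutive
vertices. -/
def ChordlessCyc (G : RGB) (l : List ℕ) : Prop :=
  ∀ (i j : ℕ) (hi : i < l.length) (hj : j < l.length), i + 2 ≤ j →
    ¬ (i = 0 ∧ j = l.length - 1) →
    ¬ G.rlAdj (l.get ⟨i, hi⟩) (l.get ⟨j, hj⟩)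

/-- æ-acyclicity: no chordless æ-cycle. -/
def AEAcyclic (G : RGB) : Prop :=
  ¬ ∃ l, G.IsAECycle l ∧ G.ChordlessCyc l

/-- MELL-correctness of an RGB-cograph. -/
def MELLCorrect (G : RGB) : Prop :=
  G.verts.Nonempty ∧ G.AEConnected ∧ G.AEAcyclic ∧
  (∀ w v v', G.lt w v → G.link v v' → ∃ w', G.link w' w ∧ G.lt w' v')

/-- MLL-correctness: MELL-correct and every vertex is atomic. -/
def MLLCorrect (G : RGB) : Prop :=
  G.MELLCorrect ∧ ∀ v ∈ G.verts, (G.lab v).isAtom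

/-- MLLu-correctness: MELL-correct and every vertex is atomic, `1` or `∘`. -/
def MLLuCorrect (G : RGB) : Prop :=
  G.MELLCorrect ∧
  ∀ v ∈ G.verts, (G.lab v).isAtom ∨ G.lab v = GLabel.one ∨ G.lab v = GLabel.hole

end RGB

/-! ## Fibrations -/

/-- No edge at all between `u` and `v` in the labeled graph `H`. -/
def LabGraph.noE (H : LabGraph) (u v : ℕ) : Prop := H.toMGraph.noEdge u v

/-- A linear fibration between labeled modal relation webs. -/
def IsLinearFib (G H : LabGraph) (f : ℕ → ℕ) : Prop :=
  (∀ v ∈ G.verts, f v ∈ H.verts) ∧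
  -- (1) preservation of R and lt
  (∀ u v, u ∈ G.verts → v ∈ G.verts →
    (G.R u v → H.R (f u) (f v)) ∧ (G.lt u v → H.lt (f u) (f v))) ∧
  -- (2) skew lifting
  (∀ v ∈ G.verts, ∀ w ∈ H.verts,
    (H.R w (f v) → ∃ u ∈ G.verts, G.R u v ∧ H.noE w (f u)) ∧
    (H.lt w (f v) → ∃ u ∈ G.verts, G.lt u v ∧ H.noE w (f u))) ∧
  -- (3) modality
  (∀ u v, u ∈ G.verts → v ∈ G.verts → u ≠ v → G.noE u v → H.lt (f u) (f v) →
    ∃ w ∈ G.verts, (G.lt w v ∧ f w = f u) ∨ (G.lt u w ∧ f w = f v)) ∧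
  -- (4) labels
  (∀ v ∈ G.verts,
    (G.lab v ≠ GLabel.hole → H.lab (f v) = G.lab v) ∧
    (G.lab v = GLabel.hole →
      H.lab (f v) = GLabel.hole ∨ H.lab (f v) = GLabel.bot ∨ H.lab (f v) = GLabel.quest)) ∧
  -- (5) ∘-domination
  (∀ w ∈ H.verts, (∀ v ∈ G.verts, f v ≠ w) →
    ∃ u ∈ G.verts, G.lab u = GLabel.hole ∧ H.lab (f u) = GLabel.quest ∧ H.lt (f u) w ∧
      ∀ v ∈ G.verts, (H.R (f v) (f u) ↔ H.R (f v) w) ∧ (H.lt (f v) (f u) ↔ H.lt (f v) w)) ∧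
  -- (6) ?-domination
  (∀ v₁ v₂, v₁ ∈ G.verts → v₂ ∈ G.verts → v₁ ≠ v₂ → f v₁ = f v₂ →
    ∃ w₁ w₂, w₁ ∈ G.verts ∧ w₂ ∈ G.verts ∧ w₁ ≠ w₂ ∧ f w₁ = f w₂ ∧
      H.lab (f w₁) = GLabel.quest ∧
      ((w₁ = v₁ ∧ w₂ = v₂) ∨ (G.lt w₁ v₁ ∧ G.lt w₂ v₂)))

/-- `v` and `w` are clones: every other vertex relates to them in the same way. -/
def Clones (G : LabGraph) (v w : ℕ) : Prop :=
  ∀ u ∈ G.verts, u ≠ v → u ≠ w →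
    (G.R u v ↔ G.R u w) ∧ (G.lt u v ↔ G.lt u w) ∧ (G.lt v u ↔ G.lt w u) ∧
    (G.noE u v ↔ G.noE u w)

/-- A ?-map between labeled modal relation webs. -/
def IsQMap (G H : LabGraph) (f : ℕ → ℕ) : Prop :=
  (∀ v ∈ G.verts, f v ∈ H.verts) ∧
  (∀ v w, v ∈ G.verts → w ∈ G.verts → v ≠ w → f v = f w →
    Clones G v w ∧ G.lt v w ∧ H.lab (f v) = G.lab w ∧
    (G.lab w = GLabel.quest ∨ G.lab w = GLabel.hole)) ∧
  (∀ v w, v ∈ G.verts → w ∈ G.verts → f v ≠ f w →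
    (G.R v w → H.R (f v) (f w)) ∧ (G.lt v w → H.lt (f v) (f w)) ∧
    (G.lt w v → H.lt (f w) (f v)) ∧ (G.noE v w → H.noE (f v) (f w))) ∧
  (∀ w ∈ H.verts, (∀ v ∈ G.verts, f v ≠ w) →
    H.lab w = GLabel.quest ∧ ∃ x, H.lt w x)

/-- A MELL-fibration: the composite of a ?-map followed by a linear fibration. -/
def IsMELLFib (G H : LabGraph) (f : ℕ → ℕ) : Prop :=
  ∃ (K : LabGraph) (g h : ℕ → ℕ),
    K.IsModalWeb ∧ IsQMap G K g ∧ IsLinearFib K H h ∧ ∀ v ∈ G.verts, f v = h (g v)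

/-- A MLLu-fibration: a MELL-fibration whose codomain has no `!` or `?` vertex. -/
def IsMLLuFib (G H : LabGraph) (f : ℕ → ℕ) : Prop :=
  IsMELLFib G H f ∧
  ∀ v ∈ H.verts, H.lab v ≠ GLabel.bang ∧ H.lab v ≠ GLabel.quest

/-- A MLL-fibration: a bijection whose codomain has no `!`, `?` or `∘` vertex. -/
def IsMLLFib (G H : LabGraph) (f : ℕ → ℕ) : Prop :=
  Set.BijOn f ↑G.verts ↑H.verts ∧
  ∀ v ∈ H.verts,
    H.lab v ≠ GLabel.bang ∧ H.lab v ≠ GLabel.quest ∧ H.lab v ≠ GLabel.hole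

/-- An allegiant map from an RGB-cograph to a labeled relation web. -/
def Allegiant (G : RGB) (H : LabGraph) (f : ℕ → ℕ) : Prop :=
  (∀ v w, v ∈ G.verts → w ∈ G.verts → G.link v w → v ≠ w →
    (G.lab v).isAtom → (G.lab w).isAtom →
    ∃ n : ℕ, (H.lab (f v) = GLabel.atom n ∧ H.lab (f w) = GLabel.natom n) ∨
             (H.lab (f v) = GLabel.natom n ∧ H.lab (f w) = GLabel.atom n)) ∧
  (∀ v ∈ G.verts, G.lab v ≠ GLabel.hole → H.lab (f v) = G.lab v) ∧
  (∀ v ∈ G.verts, G.lab v = GLabel.hole →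
    H.lab (f v) = GLabel.bot ∨ H.lab (f v) = GLabel.quest)

/-! ## Systems, correctness and combinatorial proofs, parametrized by X -/

inductive Sys where
  | MLL | MLLu | MELL

/-- Provability in the sequent system `X`. -/
def SysProv : Sys → Sequent → Prop
  | Sys.MLL  => ProvMLL
  | Sys.MLLu => ProvMLLu
  | Sys.MELL => ProvMELL

/-- Provability in the linear system `X^ℓ`. -/
def SysProvLin : Sys → Sequent → Prop
  | Sys.MLL  => ProvMLL
  | Sys.MLLu => ProvMLLuLin
  | Sys.MELL => ProvMELLLin

/-- The appropriate class of formulas for `X`: MELL-formulas for MELL; formulas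
without modalities for MLLu; formulas without modalities and without `∘` for MLL. -/
def SysForm : Sys → Formula → Prop
  | Sys.MLL  => fun F => F.noMod ∧ F.isMELL
  | Sys.MLLu => Formula.noMod
  | Sys.MELL => Formula.isMELL

/-- `X`-correctness of RGB-cographs. -/
def SysCorrect : Sys → RGB → Prop
  | Sys.MLL  => RGB.MLLCorrect
  | Sys.MLLu => RGB.MLLuCorrect
  | Sys.MELL => RGB.MELLCorrect

/-- `X`-fibrations. -/
def SysFib : Sys → LabGraph → LabGraph → (ℕ → ℕ) → Prop
  | Sys.MLL  => IsMLLFib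
  | Sys.MLLu => IsMLLuFib
  | Sys.MELL => IsMELLFib

/-- An `X`-combinatorial proof with conclusion graph `H`: an allegiant `X`-fibration
from an `X`-correct RGB-cograph. -/
def IsCombProof (X : Sys) (G : RGB) (f : ℕ → ℕ) (H : LabGraph) : Prop :=
  G.IsRGB ∧ SysCorrect X G ∧ Allegiant G H f ∧ SysFib X G.toLabGraph H f


namespace RelWebAux
open MGraph

open Classical in
/-- Color of a pair: 1 = R-edge, 2 = comparable (lt either way), 0 = no edge. -/
noncomputable def col (G : MGraph) (u v : ℕ) : ℕ :=
  if G.R u v then 1 else if G.lt u v ∨ G.lt v u then 2 else 0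

variable {G : MGraph}

lemma col_cases (G : MGraph) (u v : ℕ) : col G u v = 0 ∨ col G u v = 1 ∨ col G u v = 2 := by
  unfold col; split_ifs <;> simp

lemma col_eq_one {u v : ℕ} : col G u v = 1 ↔ G.R u v := by
  unfold col; split_ifs with h1 h2 <;> simp [h1]

lemma col_eq_two {u v : ℕ} : col G u v = 2 ↔ (¬ G.R u v ∧ (G.lt u v ∨ G.lt v u)) := by
  unfold col; split_ifs with h1 h2 <;> simp [h1] <;> tauto

lemma col_eq_zero {u v : ℕ} :
    col G u v = 0 ↔ (¬ G.R u v ∧ ¬ G.lt u v ∧ ¬ G.lt v u) := by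
  unfold col; split_ifs with h1 h2
  · simp [h1]
  · simp; tauto
  · simp; tauto

lemma s_not_R (hG : G.IsMixed) {u v : ℕ} (h : G.lt u v ∨ G.lt v u) : ¬ G.R u v := by
  obtain ⟨hsym, _, _, hex, _, _⟩ := hG
  rcases h with h | h
  · exact fun hr => hex u v ⟨hr, h⟩
  · exact fun hr => hex v u ⟨hsym u v hr, h⟩

lemma col_eq_two' (hG : G.IsMixed) {u v : ℕ} :
    col G u v = 2 ↔ (G.lt u v ∨ G.lt v u) := by
  rw [col_eq_two]
  exact ⟨fun h => h.2, fun h => ⟨s_not_R hG h, h⟩⟩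

lemma col_symm (hG : G.IsMixed) (u v : ℕ) : col G u v = col G v u := by
  obtain ⟨hsym, _⟩ := hG
  unfold col
  by_cases h1 : G.R u v
  · simp [h1, hsym u v h1]
  · have h1' : ¬ G.R v u := fun h => h1 (hsym v u h)
    by_cases h2 : G.lt u v ∨ G.lt v u
    · simp [h1, h1', h2, Or.comm.mp h2]
    · have h2' : ¬ (G.lt v u ∨ G.lt u v) := fun h => h2 (Or.comm.mp h)
      simp [h1, h1', h2, h2']

lemma col_noEdge (hG : G.IsMixed) {u v : ℕ} (h : col G u v = 0) : G.noEdge u v := by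
  rw [col_eq_zero] at h
  exact ⟨h.1, fun hr => h.1 (hG.1 v u hr), h.2.1, h.2.2⟩

end RelWebAux

namespace RelWebAux2
open MGraph RelWebAux

variable {G : MGraph}

lemma noEdge_symm {u v : ℕ} (h : G.noEdge u v) : G.noEdge v u :=
  ⟨h.2.1, h.1, h.2.2.2, h.2.2.1⟩

lemma prim3CT (hW : G.IsRelWeb) {u w v : ℕ} (hu : u ∈ G.verts) (hw : w ∈ G.verts)
    (hv : v ∈ G.verts) (huw : u ≠ w) (huv : u ≠ v) (hwv : w ≠ v)
    (h1 : G.noEdge u w) (h2 : G.R w v) (h3 : G.lt u v ∨ G.lt v u) : False :=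
  hW.2.2.2.2.2 ⟨u, w, v, hu, hw, hv, huw, huv, hwv, h1, h2, h3⟩

lemma rainbow (hW : G.IsRelWeb) {x y z : ℕ} (hx : x ∈ G.verts) (hy : y ∈ G.verts)
    (hz : z ∈ G.verts) (hxy : x ≠ y) (hxz : x ≠ z) (hyz : y ≠ z)
    (h1 : col G x y ≠ col G y z) (h2 : col G y z ≠ col G x z)
    (h3 : col G x y ≠ col G x z) : False := by
  have hG := hW.1
  have hsym := hG.1
  rcases col_cases G x y with e1 | e1 | e1 <;>
    rcases col_cases G y z with e2 | e2 | e2 <;>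
      rcases col_cases G x z with e3 | e3 | e3 <;>
        [skip; skip; skip; skip; skip; skip; skip; skip; skip;
         skip; skip; skip; skip; skip; skip; skip; skip; skip;
         skip; skip; skip; skip; skip; skip; skip; skip; skip] <;>
    first
      | omega
      | (first
        | exact prim3CT hW hx hy hz hxy hxz hyz (col_noEdge hG e1)
            (col_eq_one.mp e2) (col_eq_two.mp e3).2
        | exact prim3CT hW hy hx hz hxy.symm hyz hxz (noEdge_symm (col_noEdge hG e1))
            (col_eq_one.mp e3) (col_eq_two.mp e2).2
        | exact prim3CT hW hz hy hx hyz.symm hxz.symm hxy.symm (noEdge_symm (col_noEdge hG e2))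
            (hsym x y (col_eq_one.mp e1)) (Or.symm (col_eq_two.mp e3).2)
        | exact prim3CT hW hz hx hy hxz.symm hyz.symm hxy (noEdge_symm (col_noEdge hG e3))
            (col_eq_one.mp e1) (Or.symm (col_eq_two.mp e2).2)
        | exact prim3CT hW hy hz hx hyz hxy.symm hxz.symm (col_noEdge hG e2)
            (hsym x z (col_eq_one.mp e3)) (Or.symm (col_eq_two.mp e1).2)
        | exact prim3CT hW hx hz hy hxz hxy hyz.symm (col_noEdge hG e3)
            (hsym y z (col_eq_one.mp e2)) (col_eq_two.mp e1).2)

lemma noP4_s (hW : G.IsRelWeb) {a b c d : ℕ} (ha : a ∈ G.verts) (hb : b ∈ G.verts)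
    (hc : c ∈ G.verts) (hd : d ∈ G.verts)
    (hab : a ≠ b) (hac : a ≠ c) (had : a ≠ d) (hbc : b ≠ c) (hbd : b ≠ d) (hcd : c ≠ d)
    (e1 : G.lt a b ∨ G.lt b a) (e2 : G.lt b c ∨ G.lt c b) (e3 : G.lt c d ∨ G.lt d c)
    (n1 : ¬ (G.lt a c ∨ G.lt c a)) (n2 : ¬ (G.lt a d ∨ G.lt d a))
    (n3 : ¬ (G.lt b d ∨ G.lt d b)) : False := by
  have htr := hW.2.2.1
  have hN := hW.2.2.2.2.1
  push_neg at n1 n2 n3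
  rcases e1 with h1 | h1
  · have h2 : G.lt c b := by
      rcases e2 with h | h
      · exact absurd (htr a b c h1 h) n1.1
      · exact h
    have h3 : G.lt c d := by
      rcases e3 with h | h
      · exact h
      · exact absurd (htr d c b h h2) (fun _ => n3.2 (htr d c b h h2))
    exact hN ⟨a, b, c, d, ha, hb, hc, hd, hab, hac, had, hbc, hbd, hcd,
      h1, h2, h3, n1.1, n1.2, n2.1, n2.2, n3.1, n3.2⟩
  · have h2 : G.lt b c := by
      rcases e2 with h | h
      · exact h
      · exact absurd (htr c b a h h1) (fun _ => n1.2 (htr c b a h h1))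
    have h3 : G.lt d c := by
      rcases e3 with h | h
      · exact absurd (htr b c d h2 h) n3.1
      · exact h
    exact hN ⟨d, c, b, a, hd, hc, hb, ha, hcd.symm, hbd.symm, had.symm, hbc.symm,
      hac.symm, hab.symm, h3, h2, h1,
      fun h => n3.2 h, fun h => n3.1 h, fun h => n2.2 h, fun h => n2.1 h,
      fun h => n1.2 h, fun h => n1.1 h⟩

lemma noP4_col (hW : G.IsRelWeb) {m : ℕ} (hm : m = 1 ∨ m = 2) {a b c d : ℕ}
    (ha : a ∈ G.verts) (hb : b ∈ G.verts) (hc : c ∈ G.verts) (hd : d ∈ G.verts)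
    (hab : a ≠ b) (hac : a ≠ c) (had : a ≠ d) (hbc : b ≠ c) (hbd : b ≠ d) (hcd : c ≠ d)
    (e1 : col G a b = m) (e2 : col G b c = m) (e3 : col G c d = m)
    (n1 : col G a c ≠ m) (n2 : col G a d ≠ m) (n3 : col G b d ≠ m) : False := by
  have hG := hW.1
  rcases hm with rfl | rfl
  · rw [col_eq_one] at e1 e2 e3
    have m1 : ¬ G.R a c := fun h => n1 (col_eq_one.mpr h)
    have m2 : ¬ G.R a d := fun h => n2 (col_eq_one.mpr h)
    have m3 : ¬ G.R b d := fun h => n3 (col_eq_one.mpr h)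
    exact hW.2.2.2.1 ⟨a, b, c, d, ha, hb, hc, hd, hab, hac, had, hbc, hbd, hcd,
      e1, e2, e3, m1, m2, m3⟩
  · rw [col_eq_two' hG] at e1 e2 e3
    have m1 : ¬ (G.lt a c ∨ G.lt c a) := fun h => n1 ((col_eq_two' hG).mpr h)
    have m2 : ¬ (G.lt a d ∨ G.lt d a) := fun h => n2 ((col_eq_two' hG).mpr h)
    have m3 : ¬ (G.lt b d ∨ G.lt d b) := fun h => n3 ((col_eq_two' hG).mpr h)
    exact noP4_s hW ha hb hc hd hab hac had hbc hbd hcd e1 e2 e3 m1 m2 m3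

end RelWebAux2

namespace RelWebSplit
open MGraph RelWebAux RelWebAux2

variable {G : MGraph}

/-- Key contradiction: a "bad pair" on the same side yields a forbidden P4. -/
lemma bad_pair (hW : G.IsRelWeb) {v a b w' d k : ℕ}
    (hv : v ∈ G.verts) (ha : a ∈ G.verts) (hb : b ∈ G.verts) (hw' : w' ∈ G.verts)
    (hva : v ≠ a) (hvb : v ≠ b) (hvw : v ≠ w') (haw : a ≠ w') (hbw : b ≠ w')
    (hdk : d ≠ k)
    (h1 : col G v a = d) (h2 : col G v b = k) (h3 : col G a b = d)
    (h4 : col G v w' = d) (h5 : col G a w' = k) (h6 : col G b w' = k) : False := by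
  have hG := hW.1
  have hab : a ≠ b := by rintro rfl; rw [h1] at h2; exact hdk h2
  have kcase := col_cases G v b
  rcases col_cases G v a with e | e | e
  · -- d = 0, so k = 1 or k = 2 ; use the k-colored P4  v - b - w' - a
    rw [h1] at e; subst e
    have hk : k = 1 ∨ k = 2 := by rw [h2] at kcase; omega
    exact noP4_col hW hk hv hb hw' ha hvb hvw hva hbw hab.symm haw.symm
      h2 h6 (by rw [col_symm hG w' a]; exact h5)
      (by rw [h4]; omega) (by rw [h1]; omega)
      (by rw [col_symm hG b a, h3]; omega)
  all_goals {
    -- d = 1 or d = 2 ; use the d-colored P4  b - a - v - w'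
    rw [h1] at e
    have hd : d = 1 ∨ d = 2 := by omega
    exact noP4_col hW hd hb ha hv hw' hab.symm hvb.symm hbw hva.symm haw hvw
      (by rw [col_symm hG b a]; exact h3) (by rw [col_symm hG a v]; exact h1) h4
      (by rw [col_symm hG b v, h2]; exact hdk.symm)
      (by rw [h6]; exact hdk.symm) (by rw [h5]; exact hdk.symm) }

/-- The splitting lemma: any subset of a relation web with at least two elements admits a
monochromatic split. -/
lemma split_lemma (hW : G.IsRelWeb) :
    ∀ (n : ℕ) (V : Finset ℕ), 2 ≤ n → V.card = n → V ⊆ G.verts →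
    ∃ A B : Finset ℕ, A.Nonempty ∧ B.Nonempty ∧ Disjoint A B ∧ A ∪ B = V ∧
      ∃ k, ∀ a ∈ A, ∀ b ∈ B, col G a b = k := by
  have hG := hW.1
  intro n
  induction n using Nat.strong_induction_on with
  | _ n IH =>
  intro V hn2 hcard hsub
  by_cases hn : n = 2
  · subst hn
    obtain ⟨u, w, huw, rfl⟩ := Finset.card_eq_two.mp hcard
    refine ⟨{u}, {w}, ⟨u, by simp⟩, ⟨w, by simp⟩, by simpa using huw, rfl, col G u w, ?_⟩
    intro a ha b hb
    simp only [Finset.mem_singleton] at ha hb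
    subst ha; subst hb; rfl
  · -- inductive step : n ≥ 3
    have hn3 : 3 ≤ n := by omega
    have hVne : V.Nonempty := Finset.card_pos.mp (by omega)
    obtain ⟨v, hv⟩ := hVne
    set V' := V.erase v with hV'
    have hvV' : v ∉ V' := Finset.notMem_erase v V
    have hV'sub : V' ⊆ V := Finset.erase_subset v V
    have hV'card : V'.card = n - 1 := by rw [hV', Finset.card_erase_of_mem hv, hcard]
    obtain ⟨X, Y, hXne, hYne, hXY, hUnion, k, hcross⟩ :=
      IH (n - 1) (by omega) V' (by omega) hV'card (hV'sub.trans hsub)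
    have hXV' : X ⊆ V' := hUnion ▸ Finset.subset_union_left
    have hYV' : Y ⊆ V' := hUnion ▸ Finset.subset_union_right
    have hmemG : ∀ u ∈ V', u ∈ G.verts := fun u hu => hsub (hV'sub hu)
    have hvG : v ∈ G.verts := hsub hv
    have hvne : ∀ u ∈ V', v ≠ u := by rintro u hu rfl; exact hvV' hu
    have hIV : insert v V' = V := Finset.insert_erase hv
    by_cases hY : ∀ y ∈ Y, col G v y = k
    · refine ⟨insert v X, Y, ⟨v, Finset.mem_insert_self v X⟩, hYne, ?_, ?_, k, ?_⟩
      · exact Finset.disjoint_insert_left.mpr ⟨fun h => hvV' (hYV' h), hXY⟩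
      · rw [Finset.insert_union, hUnion, hIV]
      · intro a ha b hb
        rcases Finset.mem_insert.mp ha with rfl | ha
        · exact hY b hb
        · exact hcross a ha b hb
    by_cases hX : ∀ x ∈ X, col G v x = k
    · refine ⟨X, insert v Y, hXne, ⟨v, Finset.mem_insert_self v Y⟩, ?_, ?_, k, ?_⟩
      · exact Finset.disjoint_insert_right.mpr ⟨fun h => hvV' (hXV' h), hXY⟩
      · rw [Finset.union_insert, hUnion, hIV]
      · intro a ha b hb
        rcases Finset.mem_insert.mp hb with rfl | hb
        · rw [col_symm hG]; exact hX a ha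
        · exact hcross a ha b hb
    push_neg at hX hY
    obtain ⟨x₀, hx₀X, hx₀⟩ := hX
    obtain ⟨y₀, hy₀Y, hy₀⟩ := hY
    set d := col G v x₀ with hd
    have hx₀V' : x₀ ∈ V' := hXV' hx₀X
    have hy₀V' : y₀ ∈ V' := hYV' hy₀Y
    have hx₀y₀ : x₀ ≠ y₀ := by
      rintro rfl; exact (Finset.disjoint_left.mp hXY hx₀X) hy₀Y
    have hdk : d ≠ k := hx₀
    -- the two colors to v on both sides coincide
    have hy₀d : col G v y₀ = d := by
      by_contra hne
      refine rainbow hW (hmemG x₀ hx₀V') hvG (hmemG y₀ hy₀V')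
        (hvne x₀ hx₀V').symm hx₀y₀ (hvne y₀ hy₀V') ?_ ?_ ?_
      · rw [col_symm hG x₀ v, ← hd]; exact fun h => hne h.symm
      · rw [hcross x₀ hx₀X y₀ hy₀Y]; exact hy₀
      · rw [col_symm hG x₀ v, ← hd, hcross x₀ hx₀X y₀ hy₀Y]; exact hdk
    have hall : ∀ u ∈ V', col G v u ≠ k → col G v u = d := by
      intro u hu hne
      rw [← hUnion] at hu
      rcases Finset.mem_union.mp hu with huX | huY
      · by_contra hne2
        refine rainbow hW (hmemG u (hXV' huX)) hvG (hmemG y₀ hy₀V')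
          (hvne u (hXV' huX)).symm ?_ (hvne y₀ hy₀V') ?_ ?_ ?_
        · rintro rfl; exact (Finset.disjoint_left.mp hXY huX) hy₀Y
        · rw [col_symm hG u v, hy₀d]; exact fun h => hne2 h
        · rw [hy₀d, hcross u huX y₀ hy₀Y]; exact hdk
        · rw [col_symm hG u v, hcross u huX y₀ hy₀Y]; exact hne
      · by_contra hne2
        refine rainbow hW (hmemG u (hYV' huY)) hvG (hmemG x₀ hx₀V')
          (hvne u (hYV' huY)).symm ?_ (hvne x₀ hx₀V') ?_ ?_ ?_
        · rintro rfl; exact (Finset.disjoint_left.mp hXY hx₀X) huY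
        · rw [col_symm hG u v, ← hd]; exact fun h => hne2 h
        · rw [← hd, col_symm hG u x₀, hcross x₀ hx₀X u huY]; exact hdk
        · rw [col_symm hG u v, col_symm hG u x₀, hcross x₀ hx₀X u huY]; exact hne
    set Zc := V'.filter (fun u => col G v u = k) with hZc
    set Zd := V'.filter (fun u => ¬ col G v u = k) with hZd
    by_cases hZcE : Zc = ∅
    · -- all of V' is colored d from v
      refine ⟨{v}, V', ⟨v, Finset.mem_singleton_self v⟩, Finset.card_pos.mp (by omega), ?_, ?_, d, ?_⟩
      · simp [Finset.disjoint_singleton_left, hvV']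
      · rw [← Finset.insert_eq, hIV]
      · intro a ha b hb
        rw [Finset.mem_singleton] at ha; subst ha
        refine hall b hb (fun hc => ?_)
        have : b ∈ Zc := Finset.mem_filter.mpr ⟨hb, hc⟩
        rw [hZcE] at this; exact absurd this (Finset.notMem_empty b)
    · -- split (insert v Zd, Zc) with color k
      have hZcne : Zc.Nonempty := Finset.nonempty_of_ne_empty hZcE
      refine ⟨insert v Zd, Zc, ⟨v, Finset.mem_insert_self v Zd⟩, hZcne, ?_, ?_, k, ?_⟩
      · refine Finset.disjoint_insert_left.mpr ⟨?_, ?_⟩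
        · exact fun h => hvV' (Finset.mem_of_mem_filter v h)
        · rw [hZd, hZc]
          exact Finset.disjoint_filter_filter' V' V'
            (disjoint_compl_left (a := fun u => col G v u = k))
      · rw [Finset.insert_union, hZd, hZc, Finset.union_comm,
          Finset.filter_union_filter_not_eq (fun u => col G v u = k) V', hIV]
      · intro a ha b hb
        have hbZc := Finset.mem_filter.mp hb
        rcases Finset.mem_insert.mp ha with rfl | haZd
        · exact hbZc.2
        · have haZd' := Finset.mem_filter.mp haZd
          have hadcol : col G v a = d := hall a haZd'.1 haZd'.2
          have hbV' := hbZc.1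
          have haV' := haZd'.1
          have hab : a ≠ b := by
            rintro rfl; exact haZd'.2 hbZc.2
          -- same-side / opposite-side analysis
          rw [← hUnion] at haV' hbV'
          rcases Finset.mem_union.mp haV' with haX | haY <;>
            rcases Finset.mem_union.mp hbV' with hbX | hbY
          · -- both in X : possible bad pair, use y₀
            by_contra hne
            have h3 : col G a b = d := by
              by_contra hne2
              refine rainbow hW (hmemG a haZd'.1) hvG (hmemG b hbZc.1)
                (hvne a haZd'.1).symm hab (hvne b hbZc.1) ?_ ?_ ?_
              · rw [col_symm hG a v, hadcol, hbZc.2]; exact hdk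
              · rw [hbZc.2]; exact fun h => hne h.symm
              · rw [col_symm hG a v, hadcol]; exact fun h => hne2 h.symm
            refine bad_pair hW hvG (hmemG a haZd'.1) (hmemG b hbZc.1) (hmemG y₀ hy₀V')
              (hvne a haZd'.1) (hvne b hbZc.1) (hvne y₀ hy₀V') ?_ ?_ hdk
              hadcol hbZc.2 h3 hy₀d (hcross a haX y₀ hy₀Y) (hcross b hbX y₀ hy₀Y)
            · rintro rfl; exact (Finset.disjoint_left.mp hXY haX) hy₀Y
            · rintro rfl; exact (Finset.disjoint_left.mp hXY hbX) hy₀Y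
          · -- a in X, b in Y : cross pair
            exact hcross a haX b hbY
          · -- a in Y, b in X : cross pair, flipped
            rw [col_symm hG]; exact hcross b hbX a haY
          · -- both in Y : use x₀
            by_contra hne
            have h3 : col G a b = d := by
              by_contra hne2
              refine rainbow hW (hmemG a haZd'.1) hvG (hmemG b hbZc.1)
                (hvne a haZd'.1).symm hab (hvne b hbZc.1) ?_ ?_ ?_
              · rw [col_symm hG a v, hadcol, hbZc.2]; exact hdk
              · rw [hbZc.2]; exact fun h => hne h.symm
              · rw [col_symm hG a v, hadcol]; exact fun h => hne2 h.symm
            refine bad_pair hW hvG (hmemG a haZd'.1) (hmemG b hbZc.1) (hmemG x₀ hx₀V')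
              (hvne a haZd'.1) (hvne b hbZc.1) (hvne x₀ hx₀V') ?_ ?_ hdk
              hadcol hbZc.2 h3 hd.symm ?_ ?_
            · rintro rfl; exact (Finset.disjoint_left.mp hXY hx₀X) haY
            · rintro rfl; exact (Finset.disjoint_left.mp hXY hx₀X) hbY
            · rw [col_symm hG a x₀]; exact hcross x₀ hx₀X a haY
            · rw [col_symm hG b x₀]; exact hcross x₀ hx₀X b hbY

end RelWebSplit

namespace RelWebDir
open MGraph RelWebAux RelWebAux2

variable {G : MGraph}

/-- Turn an undirected comparability split into a directed one. -/
lemma directed_split (hW : G.IsRelWeb) {V A B : Finset ℕ} (hsub : V ⊆ G.verts)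
    (hA : A.Nonempty) (hB : B.Nonempty) (hdisj : Disjoint A B) (hun : A ∪ B = V)
    (hcross : ∀ a ∈ A, ∀ b ∈ B, G.lt a b ∨ G.lt b a) :
    ∃ A' B' : Finset ℕ, A'.Nonempty ∧ B'.Nonempty ∧ Disjoint A' B' ∧ A' ∪ B' = V ∧
      ∀ a ∈ A', ∀ b ∈ B', G.lt a b := by
  classical
  have htr := hW.2.2.1
  obtain ⟨a₀, ha₀A⟩ := hA
  have hAV : A ⊆ V := hun ▸ Finset.subset_union_left
  have hBV : B ⊆ V := hun ▸ Finset.subset_union_right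
  have ha₀V : a₀ ∈ V := hAV ha₀A
  set step : ℕ → ℕ → Prop :=
    fun u w => u ∈ V ∧ w ∈ V ∧ ¬ (G.lt u w ∨ G.lt w u) with hstep
  set Conn : ℕ → Prop := fun u => Relation.ReflTransGen step a₀ u with hConn
  have hCA : ∀ u, Conn u → u ∈ A := by
    intro u h
    induction h with
    | refl => exact ha₀A
    | tail h1 h2 ih =>
      rename_i b c
      have hcV : c ∈ V := h2.2.1
      rw [← hun] at hcV
      rcases Finset.mem_union.mp hcV with h | h
      · exact h
      · exact absurd (hcross b ih c h) h2.2.2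
  have hCV : ∀ u, Conn u → u ∈ V := fun u h => hAV (hCA u h)
  have hconst : ∀ u, Conn u → ∀ w ∈ V, ¬ Conn w →
      ((G.lt w a₀ ↔ G.lt w u) ∧ (G.lt a₀ w ↔ G.lt u w)) := by
    intro u h
    induction h with
    | refl => intro w _ _; exact ⟨Iff.rfl, Iff.rfl⟩
    | tail h1 h2 ih =>
      rename_i b c
      intro w hwV hwnc
      have ihw := ih w hwV hwnc
      have hsbc : ¬ (G.lt b c ∨ G.lt c b) := h2.2.2
      have hcV : c ∈ V := h2.2.1
      have hbV : b ∈ V := h2.1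
      have hConnc : Conn c := Relation.ReflTransGen.tail h1 h2
      have hscw : G.lt c w ∨ G.lt w c := by
        by_contra hcon
        exact hwnc (Relation.ReflTransGen.tail hConnc ⟨hcV, hwV, hcon⟩)
      have hsbw : G.lt b w ∨ G.lt w b := by
        by_contra hcon
        exact hwnc (Relation.ReflTransGen.tail h1 ⟨hbV, hwV, hcon⟩)
      constructor
      · constructor
        · intro hwa
          have hwb : G.lt w b := (ihw.1).mp hwa
          rcases hscw with h | h
          · exact absurd (htr c w b h hwb) (fun hh => hsbc (Or.inr hh))
          · exact h
        · intro hwc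
          refine (ihw.1).mpr ?_
          rcases hsbw with h | h
          · exact absurd (htr b w c h hwc) (fun hh => hsbc (Or.inl hh))
          · exact h
      · constructor
        · intro haw
          have hbw : G.lt b w := (ihw.2).mp haw
          rcases hscw with h | h
          · exact h
          · exact absurd (htr b w c hbw h) (fun hh => hsbc (Or.inl hh))
        · intro hcw
          refine (ihw.2).mpr ?_
          rcases hsbw with h | h
          · exact h
          · exact absurd (htr c w b hcw h) (fun hh => hsbc (Or.inr hh))
  have hcomp : ∀ w ∈ V, ¬ Conn w → (G.lt w a₀ ∨ G.lt a₀ w) := by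
    intro w hwV hwnc
    by_contra hcon
    push_neg at hcon
    exact hwnc (Relation.ReflTransGen.single ⟨ha₀V, hwV, fun h => by tauto⟩)
  set C : Finset ℕ := V.filter Conn with hC
  have ha₀C : a₀ ∈ C := Finset.mem_filter.mpr ⟨ha₀V, Relation.ReflTransGen.refl⟩
  have hBnC : ∀ b ∈ B, b ∉ C := by
    intro b hb hbC
    exact (Finset.disjoint_left.mp hdisj (hCA b (Finset.mem_filter.mp hbC).2)) hb
  set Down : Finset ℕ := V.filter (fun w => ¬ Conn w ∧ G.lt w a₀) with hDown
  by_cases hD : Down = ∅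
  · refine ⟨C, V \ C, ⟨a₀, ha₀C⟩, ?_, Finset.disjoint_sdiff, ?_, ?_⟩
    · obtain ⟨b, hb⟩ := hB
      exact ⟨b, Finset.mem_sdiff.mpr ⟨hBV hb, hBnC b hb⟩⟩
    · exact Finset.union_sdiff_of_subset (Finset.filter_subset _ _)
    · intro u hu w hw
      obtain ⟨hwV, hwnC⟩ := Finset.mem_sdiff.mp hw
      have hwnc : ¬ Conn w := fun h => hwnC (Finset.mem_filter.mpr ⟨hwV, h⟩)
      have huC := Finset.mem_filter.mp hu
      rcases hcomp w hwV hwnc with h | h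
      · have : w ∈ Down := Finset.mem_filter.mpr ⟨hwV, hwnc, h⟩
        rw [hD] at this
        exact absurd this (Finset.notMem_empty w)
      · exact (hconst u huC.2 w hwV hwnc).2.mp h
  · obtain ⟨w₀, hw₀⟩ := Finset.nonempty_of_ne_empty hD
    refine ⟨Down, V \ Down, ⟨w₀, hw₀⟩, ?_, Finset.disjoint_sdiff, ?_, ?_⟩
    · refine ⟨a₀, Finset.mem_sdiff.mpr ⟨ha₀V, fun h => ?_⟩⟩
      exact (Finset.mem_filter.mp h).2.1 Relation.ReflTransGen.refl
    · exact Finset.union_sdiff_of_subset (Finset.filter_subset _ _)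
    · intro w hw q hq
      obtain ⟨hwV, hwnc, hwlt⟩ := Finset.mem_filter.mp hw
      obtain ⟨hqV, hqnD⟩ := Finset.mem_sdiff.mp hq
      by_cases hqc : Conn q
      · exact (hconst q hqc w hwV hwnc).1.mp hwlt
      · have : ¬ G.lt q a₀ := fun h => hqnD (Finset.mem_filter.mpr ⟨hqV, hqc, h⟩)
        rcases hcomp q hqV hqc with h | h
        · exact absurd h this
        · exact htr w a₀ q hwlt h

end RelWebDir

namespace RelWebCombo
open MGraph

variable {G H : MGraph}

lemma sideR (hGm : G.IsMixed) (hHm : H.IsMixed) {u v : ℕ} (h : G.R u v ∨ H.R u v) :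
    (G.R u v ∧ u ∈ G.verts ∧ v ∈ G.verts) ∨ (H.R u v ∧ u ∈ H.verts ∧ v ∈ H.verts) := by
  rcases h with h | h
  · exact Or.inl ⟨h, hGm.2.2.2.2.1 u v h⟩
  · exact Or.inr ⟨h, hHm.2.2.2.2.1 u v h⟩

lemma sideLt (hGm : G.IsMixed) (hHm : H.IsMixed) {u v : ℕ} (h : G.lt u v ∨ H.lt u v) :
    (G.lt u v ∧ u ∈ G.verts ∧ v ∈ G.verts) ∨ (H.lt u v ∧ u ∈ H.verts ∧ v ∈ H.verts) := by
  rcases h with h | h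
  · exact Or.inl ⟨h, hGm.2.2.2.2.2 u v h⟩
  · exact Or.inr ⟨h, hHm.2.2.2.2.2 u v h⟩

lemma sameSide (hdisj : Disjoint G.verts H.verts) {u v : ℕ}
    (hu : u ∈ G.verts ∪ H.verts) (hv : v ∈ G.verts ∪ H.verts)
    (h : ¬ ((u ∈ G.verts ∧ v ∈ H.verts) ∨ (u ∈ H.verts ∧ v ∈ G.verts))) :
    (u ∈ G.verts ∧ v ∈ G.verts) ∨ (u ∈ H.verts ∧ v ∈ H.verts) := by
  rcases Finset.mem_union.mp hu with h1 | h1 <;> rcases Finset.mem_union.mp hv with h2 | h2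
  · exact Or.inl ⟨h1, h2⟩
  · exact absurd (Or.inl ⟨h1, h2⟩) h
  · exact absurd (Or.inr ⟨h1, h2⟩) h
  · exact Or.inr ⟨h1, h2⟩

section

variable (hWG : G.IsRelWeb) (hWH : H.IsRelWeb) (hdisj : Disjoint G.verts H.verts)

include hWG hWH hdisj

lemma uniq {u : ℕ} (h1 : u ∈ G.verts) (h2 : u ∈ H.verts) : False :=
  Finset.disjoint_left.mp hdisj h1 h2

lemma mixed_uparr : (uparr G H).IsMixed := by
  have hGm := hWG.1; have hHm := hWH.1
  refine ⟨?_, ?_, ?_, ?_, ?_, ?_⟩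
  · rintro u v (h | h)
    · exact Or.inl (hGm.1 u v h)
    · exact Or.inr (hHm.1 u v h)
  · rintro v (h | h)
    · exact hGm.2.1 v h
    · exact hHm.2.1 v h
  · rintro v (h | h)
    · exact hGm.2.2.1 v h
    · exact hHm.2.2.1 v h
  · rintro u v ⟨hR, hlt⟩
    rcases sideR hGm hHm hR with ⟨h1, hu, hv⟩ | ⟨h1, hu, hv⟩ <;>
      rcases sideLt hGm hHm hlt with ⟨h2, hu', hv'⟩ | ⟨h2, hu', hv'⟩
    · exact hGm.2.2.2.1 u v ⟨h1, h2⟩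
    · exact uniq hWG hWH hdisj hu hu'
    · exact uniq hWG hWH hdisj hu' hu
    · exact hHm.2.2.2.1 u v ⟨h1, h2⟩
  · intro u v h
    rcases sideR hGm hHm h with ⟨_, hu, hv⟩ | ⟨_, hu, hv⟩
    · exact ⟨Finset.mem_union_left _ hu, Finset.mem_union_left _ hv⟩
    · exact ⟨Finset.mem_union_right _ hu, Finset.mem_union_right _ hv⟩
  · intro u v h
    rcases sideLt hGm hHm h with ⟨_, hu, hv⟩ | ⟨_, hu, hv⟩
    · exact ⟨Finset.mem_union_left _ hu, Finset.mem_union_left _ hv⟩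
    · exact ⟨Finset.mem_union_right _ hu, Finset.mem_union_right _ hv⟩

lemma trans_or : ∀ u v w, (G.lt u v ∨ H.lt u v) → (G.lt v w ∨ H.lt v w) →
    (G.lt u w ∨ H.lt u w) := by
  have hGm := hWG.1; have hHm := hWH.1
  intro u v w h1 h2
  rcases sideLt hGm hHm h1 with ⟨e1, hu, hv⟩ | ⟨e1, hu, hv⟩ <;>
    rcases sideLt hGm hHm h2 with ⟨e2, hv', hw⟩ | ⟨e2, hv', hw⟩
  · exact Or.inl (hWG.2.2.1 u v w e1 e2)
  · exact (uniq hWG hWH hdisj hv hv').elim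
  · exact (uniq hWG hWH hdisj hv' hv).elim
  · exact Or.inr (hWH.2.2.1 u v w e1 e2)

lemma noP4_or :
    ¬ ∃ w x y z, w ∈ G.verts ∪ H.verts ∧ x ∈ G.verts ∪ H.verts ∧
      y ∈ G.verts ∪ H.verts ∧ z ∈ G.verts ∪ H.verts ∧
      w ≠ x ∧ w ≠ y ∧ w ≠ z ∧ x ≠ y ∧ x ≠ z ∧ y ≠ z ∧
      (G.R w x ∨ H.R w x) ∧ (G.R x y ∨ H.R x y) ∧ (G.R y z ∨ H.R y z) ∧
      ¬ (G.R w y ∨ H.R w y) ∧ ¬ (G.R w z ∨ H.R w z) ∧ ¬ (G.R x z ∨ H.R x z) := by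
  have hGm := hWG.1; have hHm := hWH.1
  rintro ⟨w, x, y, z, _, _, _, _, d1, d2, d3, d4, d5, d6, e1, e2, e3, n1, n2, n3⟩
  rcases sideR hGm hHm e1 with ⟨f1, hw, hx⟩ | ⟨f1, hw, hx⟩ <;>
    rcases sideR hGm hHm e2 with ⟨f2, hx', hy⟩ | ⟨f2, hx', hy⟩ <;>
      rcases sideR hGm hHm e3 with ⟨f3, hy', hz⟩ | ⟨f3, hy', hz⟩
  · exact hWG.2.2.2.1 ⟨w, x, y, z, hw, hx, hy, hz, d1, d2, d3, d4, d5, d6, f1, f2, f3,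
      fun h => n1 (Or.inl h), fun h => n2 (Or.inl h), fun h => n3 (Or.inl h)⟩
  · exact uniq hWG hWH hdisj hy hy'
  · exact uniq hWG hWH hdisj hx hx'
  · exact uniq hWG hWH hdisj hx hx'
  · exact uniq hWG hWH hdisj hx' hx
  · exact uniq hWG hWH hdisj hx' hx
  · exact uniq hWG hWH hdisj hy' hy
  · exact hWH.2.2.2.1 ⟨w, x, y, z, hw, hx, hy, hz, d1, d2, d3, d4, d5, d6, f1, f2, f3,
      fun h => n1 (Or.inr h), fun h => n2 (Or.inr h), fun h => n3 (Or.inr h)⟩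

lemma noN_or :
    ¬ ∃ u v y z, u ∈ G.verts ∪ H.verts ∧ v ∈ G.verts ∪ H.verts ∧
      y ∈ G.verts ∪ H.verts ∧ z ∈ G.verts ∪ H.verts ∧
      u ≠ v ∧ u ≠ y ∧ u ≠ z ∧ v ≠ y ∧ v ≠ z ∧ y ≠ z ∧
      (G.lt u v ∨ H.lt u v) ∧ (G.lt y v ∨ H.lt y v) ∧ (G.lt y z ∨ H.lt y z) ∧
      ¬ (G.lt u y ∨ H.lt u y) ∧ ¬ (G.lt y u ∨ H.lt y u) ∧
      ¬ (G.lt u z ∨ H.lt u z) ∧ ¬ (G.lt z u ∨ H.lt z u) ∧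
      ¬ (G.lt v z ∨ H.lt v z) ∧ ¬ (G.lt z v ∨ H.lt z v) := by
  have hGm := hWG.1; have hHm := hWH.1
  rintro ⟨u, v, y, z, _, _, _, _, d1, d2, d3, d4, d5, d6, e1, e2, e3,
    n1, n2, n3, n4, n5, n6⟩
  rcases sideLt hGm hHm e1 with ⟨f1, hu, hv⟩ | ⟨f1, hu, hv⟩ <;>
    rcases sideLt hGm hHm e2 with ⟨f2, hy, hv'⟩ | ⟨f2, hy, hv'⟩ <;>
      rcases sideLt hGm hHm e3 with ⟨f3, hy', hz⟩ | ⟨f3, hy', hz⟩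
  · exact hWG.2.2.2.2.1 ⟨u, v, y, z, hu, hv, hy, hz, d1, d2, d3, d4, d5, d6, f1, f2, f3,
      fun h => n1 (Or.inl h), fun h => n2 (Or.inl h), fun h => n3 (Or.inl h),
      fun h => n4 (Or.inl h), fun h => n5 (Or.inl h), fun h => n6 (Or.inl h)⟩
  · exact uniq hWG hWH hdisj hy hy'
  · exact uniq hWG hWH hdisj hv hv'
  · exact uniq hWG hWH hdisj hv hv'
  · exact uniq hWG hWH hdisj hv' hv
  · exact uniq hWG hWH hdisj hv' hv
  · exact uniq hWG hWH hdisj hy' hy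
  · exact hWH.2.2.2.2.1 ⟨u, v, y, z, hu, hv, hy, hz, d1, d2, d3, d4, d5, d6, f1, f2, f3,
      fun h => n1 (Or.inr h), fun h => n2 (Or.inr h), fun h => n3 (Or.inr h),
      fun h => n4 (Or.inr h), fun h => n5 (Or.inr h), fun h => n6 (Or.inr h)⟩

lemma web_uparr : (uparr G H).IsRelWeb := by
  refine ⟨mixed_uparr hWG hWH hdisj, ?_, ?_, ?_, ?_, ?_⟩
  · obtain ⟨x, hx⟩ := hWG.2.1
    exact ⟨x, Finset.mem_union_left _ hx⟩
  · exact trans_or hWG hWH hdisj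
  · exact noP4_or hWG hWH hdisj
  · exact noN_or hWG hWH hdisj
  · -- 3-color triangle
    have hGm := hWG.1; have hHm := hWH.1
    rintro ⟨u, w, v, hu, hw, hv, d1, d2, d3, hno, hR, hs⟩
    have hs' : (G.lt u v ∨ H.lt u v) ∨ (G.lt v u ∨ H.lt v u) := hs
    rcases sideR hGm hHm hR with ⟨f1, hw1, hv1⟩ | ⟨f1, hw1, hv1⟩
    · -- w R v in G
      have huv : u ∈ G.verts ∧ (G.lt u v ∨ G.lt v u) := by
        rcases hs' with (h | h) | (h | h)
        · exact ⟨(hGm.2.2.2.2.2 u v h).1, Or.inl h⟩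
        · exact absurd (hHm.2.2.2.2.2 u v h).2 (fun hh => uniq hWG hWH hdisj hv1 hh)
        · exact ⟨(hGm.2.2.2.2.2 v u h).2, Or.inr h⟩
        · exact absurd (hHm.2.2.2.2.2 v u h).1 (fun hh => uniq hWG hWH hdisj hv1 hh)
      refine hWG.2.2.2.2.2 ⟨u, w, v, huv.1, hw1, hv1, d1, d2, d3, ?_, f1, huv.2⟩
      obtain ⟨m1, m2, m3, m4⟩ := hno
      exact ⟨fun h => m1 (Or.inl h), fun h => m2 (Or.inl h),
        fun h => m3 (Or.inl h), fun h => m4 (Or.inl h)⟩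
    · have huv : u ∈ H.verts ∧ (H.lt u v ∨ H.lt v u) := by
        rcases hs' with (h | h) | (h | h)
        · exact absurd (hGm.2.2.2.2.2 u v h).2 (fun hh => uniq hWG hWH hdisj hh hv1)
        · exact ⟨(hHm.2.2.2.2.2 u v h).1, Or.inl h⟩
        · exact absurd (hGm.2.2.2.2.2 v u h).1 (fun hh => uniq hWG hWH hdisj hh hv1)
        · exact ⟨(hHm.2.2.2.2.2 v u h).2, Or.inr h⟩
      refine hWH.2.2.2.2.2 ⟨u, w, v, huv.1, hw1, hv1, d1, d2, d3, ?_, f1, huv.2⟩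
      obtain ⟨m1, m2, m3, m4⟩ := hno
      exact ⟨fun h => m1 (Or.inr h), fun h => m2 (Or.inr h),
        fun h => m3 (Or.inr h), fun h => m4 (Or.inr h)⟩

end

end RelWebCombo

namespace RelWebCombo2
open MGraph RelWebCombo

variable {G H : MGraph}

section
variable (hWG : G.IsRelWeb) (hWH : H.IsRelWeb) (hdisj : Disjoint G.verts H.verts)
include hWG hWH hdisj

lemma web_utens : (utens G H).IsRelWeb := by
  have hGm := hWG.1; have hHm := hWH.1
  have hP := web_uparr hWG hWH hdisj
  refine ⟨?_, hP.2.1, hP.2.2.1, ?_, hP.2.2.2.2.1, ?_⟩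
  · -- mixed
    refine ⟨?_, ?_, (mixed_uparr hWG hWH hdisj).2.2.1, ?_, ?_,
      (mixed_uparr hWG hWH hdisj).2.2.2.2.2⟩
    · rintro u v (h | h | ⟨h1, h2⟩ | ⟨h1, h2⟩)
      · exact Or.inl (hGm.1 u v h)
      · exact Or.inr (Or.inl (hHm.1 u v h))
      · exact Or.inr (Or.inr (Or.inr ⟨h2, h1⟩))
      · exact Or.inr (Or.inr (Or.inl ⟨h2, h1⟩))
    · rintro v (h | h | ⟨h1, h2⟩ | ⟨h1, h2⟩)
      · exact hGm.2.1 v h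
      · exact hHm.2.1 v h
      · exact uniq hWG hWH hdisj h1 h2
      · exact uniq hWG hWH hdisj h2 h1
    · rintro u v ⟨hR, hlt⟩
      rcases sideLt hGm hHm hlt with ⟨h2, hu', hv'⟩ | ⟨h2, hu', hv'⟩ <;>
        rcases hR with h | h | ⟨h1, h2'⟩ | ⟨h1, h2'⟩
      · exact hGm.2.2.2.1 u v ⟨h, h2⟩
      · exact uniq hWG hWH hdisj hu' (hHm.2.2.2.2.1 u v h).1
      · exact uniq hWG hWH hdisj hv' h2'
      · exact uniq hWG hWH hdisj hu' h1
      · exact uniq hWG hWH hdisj (hGm.2.2.2.2.1 u v h).1 hu'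
      · exact hHm.2.2.2.1 u v ⟨h, h2⟩
      · exact uniq hWG hWH hdisj h1 hu'
      · exact uniq hWG hWH hdisj h2' hv'
    · rintro u v (h | h | ⟨h1, h2⟩ | ⟨h1, h2⟩)
      · have := hGm.2.2.2.2.1 u v h
        exact ⟨Finset.mem_union_left _ this.1, Finset.mem_union_left _ this.2⟩
      · have := hHm.2.2.2.2.1 u v h
        exact ⟨Finset.mem_union_right _ this.1, Finset.mem_union_right _ this.2⟩
      · exact ⟨Finset.mem_union_left _ h1, Finset.mem_union_right _ h2⟩
      · exact ⟨Finset.mem_union_right _ h1, Finset.mem_union_left _ h2⟩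
  · -- no P4
    rintro ⟨w, x, y, z, hw, hx, hy, hz, d1, d2, d3, d4, d5, d6, e1, e2, e3, n1, n2, n3⟩
    have swy := sameSide hdisj hw hy (fun h => n1 (Or.inr (Or.inr h)))
    have swz := sameSide hdisj hw hz (fun h => n2 (Or.inr (Or.inr h)))
    have sxz := sameSide hdisj hx hz (fun h => n3 (Or.inr (Or.inr h)))
    have hloc : ∀ {a b : ℕ}, (utens G H).R a b →
        (a ∈ G.verts ∧ b ∈ G.verts → G.R a b) ∧ (a ∈ H.verts ∧ b ∈ H.verts → H.R a b) := by
      rintro a b (h | h | ⟨h1, h2⟩ | ⟨h1, h2⟩)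
      · exact ⟨fun _ => h, fun hm => (uniq hWG hWH hdisj (hGm.2.2.2.2.1 a b h).1 hm.1).elim⟩
      · exact ⟨fun hm => (uniq hWG hWH hdisj hm.1 (hHm.2.2.2.2.1 a b h).1).elim, fun _ => h⟩
      · exact ⟨fun hm => (uniq hWG hWH hdisj hm.2 h2).elim,
          fun hm => (uniq hWG hWH hdisj h1 hm.1).elim⟩
      · exact ⟨fun hm => (uniq hWG hWH hdisj hm.1 h1).elim,
          fun hm => (uniq hWG hWH hdisj h2 hm.2).elim⟩
    rcases swy with ⟨hwG, hyG⟩ | ⟨hwH, hyH⟩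
    · have hzG : z ∈ G.verts := by
        rcases swz with ⟨_, h⟩ | ⟨h, _⟩
        · exact h
        · exact (uniq hWG hWH hdisj hwG h).elim
      have hxG : x ∈ G.verts := by
        rcases sxz with ⟨h, _⟩ | ⟨h1, h2⟩
        · exact h
        · exact (uniq hWG hWH hdisj hzG h2).elim
      exact hWG.2.2.2.1 ⟨w, x, y, z, hwG, hxG, hyG, hzG, d1, d2, d3, d4, d5, d6,
        (hloc e1).1 ⟨hwG, hxG⟩, (hloc e2).1 ⟨hxG, hyG⟩, (hloc e3).1 ⟨hyG, hzG⟩,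
        fun h => n1 (Or.inl h), fun h => n2 (Or.inl h), fun h => n3 (Or.inl h)⟩
    · have hzH : z ∈ H.verts := by
        rcases swz with ⟨h, _⟩ | ⟨_, h⟩
        · exact (uniq hWG hWH hdisj h hwH).elim
        · exact h
      have hxH : x ∈ H.verts := by
        rcases sxz with ⟨_, h⟩ | ⟨h, _⟩
        · exact (uniq hWG hWH hdisj h hzH).elim
        · exact h
      exact hWH.2.2.2.1 ⟨w, x, y, z, hwH, hxH, hyH, hzH, d1, d2, d3, d4, d5, d6,
        (hloc e1).2 ⟨hwH, hxH⟩, (hloc e2).2 ⟨hxH, hyH⟩, (hloc e3).2 ⟨hyH, hzH⟩,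
        fun h => n1 (Or.inr (Or.inl h)), fun h => n2 (Or.inr (Or.inl h)),
        fun h => n3 (Or.inr (Or.inl h))⟩
  · -- no 3-color triangle
    rintro ⟨u, w, v, hu, hw, hv, d1, d2, d3, hno, hR, hs⟩
    obtain ⟨m1, m2, m3, m4⟩ := hno
    have suw := sameSide hdisj hu hw (fun h => m1 (Or.inr (Or.inr h)))
    have suv : (u ∈ G.verts ∧ v ∈ G.verts) ∨ (u ∈ H.verts ∧ v ∈ H.verts) := by
      rcases hs with h | h
      · rcases sideLt hGm hHm h with ⟨_, h1, h2⟩ | ⟨_, h1, h2⟩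
        · exact Or.inl ⟨h1, h2⟩
        · exact Or.inr ⟨h1, h2⟩
      · rcases sideLt hGm hHm h with ⟨_, h1, h2⟩ | ⟨_, h1, h2⟩
        · exact Or.inl ⟨h2, h1⟩
        · exact Or.inr ⟨h2, h1⟩
    rcases suw with ⟨huG, hwG⟩ | ⟨huH, hwH⟩
    · obtain ⟨_, hvG⟩ := suv.resolve_right (fun h => uniq hWG hWH hdisj huG h.1)
      have hRG : G.R w v := by
        rcases hR with h | h | ⟨h1, h2⟩ | ⟨h1, h2⟩
        · exact h
        · exact (uniq hWG hWH hdisj hwG (hHm.2.2.2.2.1 w v h).1).elim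
        · exact (uniq hWG hWH hdisj hvG h2).elim
        · exact (uniq hWG hWH hdisj hwG h1).elim
      have hsG : G.lt u v ∨ G.lt v u := by
        rcases hs with h | h
        · rcases h with h | h
          · exact Or.inl h
          · exact (uniq hWG hWH hdisj huG (hHm.2.2.2.2.2 u v h).1).elim
        · rcases h with h | h
          · exact Or.inr h
          · exact (uniq hWG hWH hdisj hvG (hHm.2.2.2.2.2 v u h).1).elim
      exact hWG.2.2.2.2.2 ⟨u, w, v, huG, hwG, hvG, d1, d2, d3,
        ⟨fun h => m1 (Or.inl h), fun h => m2 (Or.inl h),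
         fun h => m3 (Or.inl h), fun h => m4 (Or.inl h)⟩, hRG, hsG⟩
    · obtain ⟨_, hvH⟩ := suv.resolve_left (fun h => uniq hWG hWH hdisj h.1 huH)
      have hRH : H.R w v := by
        rcases hR with h | h | ⟨h1, h2⟩ | ⟨h1, h2⟩
        · exact (uniq hWG hWH hdisj (hGm.2.2.2.2.1 w v h).1 hwH).elim
        · exact h
        · exact (uniq hWG hWH hdisj h1 hwH).elim
        · exact (uniq hWG hWH hdisj h2 hvH).elim
      have hsH : H.lt u v ∨ H.lt v u := by
        rcases hs with h | h
        · rcases h with h | h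
          · exact (uniq hWG hWH hdisj (hGm.2.2.2.2.2 u v h).1 huH).elim
          · exact Or.inl h
        · rcases h with h | h
          · exact (uniq hWG hWH hdisj (hGm.2.2.2.2.2 v u h).1 hvH).elim
          · exact Or.inr h
      exact hWH.2.2.2.2.2 ⟨u, w, v, huH, hwH, hvH, d1, d2, d3,
        ⟨fun h => m1 (Or.inr (Or.inl h)), fun h => m2 (Or.inr (Or.inl h)),
         fun h => m3 (Or.inr h), fun h => m4 (Or.inr h)⟩, hRH, hsH⟩

end
end RelWebCombo2

namespace RelWebCombo3
open MGraph RelWebCombo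

variable {G H : MGraph}

section
variable (hWG : G.IsRelWeb) (hWH : H.IsRelWeb) (hdisj : Disjoint G.verts H.verts)
include hWG hWH hdisj

lemma web_useq : (useq G H).IsRelWeb := by
  have hGm := hWG.1; have hHm := hWH.1
  have hP := web_uparr hWG hWH hdisj
  have hGv : ∀ {a b : ℕ}, G.lt a b → a ∈ G.verts ∧ b ∈ G.verts :=
    fun h => hGm.2.2.2.2.2 _ _ h
  have hHv : ∀ {a b : ℕ}, H.lt a b → a ∈ H.verts ∧ b ∈ H.verts :=
    fun h => hHm.2.2.2.2.2 _ _ h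
  have hGRv : ∀ {a b : ℕ}, G.R a b → a ∈ G.verts ∧ b ∈ G.verts :=
    fun h => hGm.2.2.2.2.1 _ _ h
  have hHRv : ∀ {a b : ℕ}, H.R a b → a ∈ H.verts ∧ b ∈ H.verts :=
    fun h => hHm.2.2.2.2.1 _ _ h
  have U : ∀ {a : ℕ}, a ∈ G.verts → a ∈ H.verts → False :=
    fun h1 h2 => uniq hWG hWH hdisj h1 h2
  refine ⟨?_, hP.2.1, ?_, hP.2.2.2.1, ?_, ?_⟩
  · -- mixed
    refine ⟨(mixed_uparr hWG hWH hdisj).1, (mixed_uparr hWG hWH hdisj).2.1, ?_, ?_, 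
      (mixed_uparr hWG hWH hdisj).2.2.2.2.1, ?_⟩
    · rintro v (h | h | ⟨h1, h2⟩)
      · exact hGm.2.2.1 v h
      · exact hHm.2.2.1 v h
      · exact U h1 h2
    · rintro u v ⟨hR, hlt⟩
      rcases hR with h | h <;> rcases hlt with h' | h' | ⟨h1, h2⟩
      · exact hGm.2.2.2.1 u v ⟨h, h'⟩
      · exact U (hGRv h).1 (hHv h').1
      · exact U (hGRv h).2 h2
      · exact U (hGv h').1 (hHRv h).1
      · exact hHm.2.2.2.1 u v ⟨h, h'⟩
      · exact U h1 (hHRv h).1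
    · rintro u v (h | h | ⟨h1, h2⟩)
      · exact ⟨Finset.mem_union_left _ (hGv h).1, Finset.mem_union_left _ (hGv h).2⟩
      · exact ⟨Finset.mem_union_right _ (hHv h).1, Finset.mem_union_right _ (hHv h).2⟩
      · exact ⟨Finset.mem_union_left _ h1, Finset.mem_union_right _ h2⟩
  · -- transitivity
    rintro u v w (h | h | ⟨h1, h2⟩) (h' | h' | ⟨h1', h2'⟩)
    · exact Or.inl (hWG.2.2.1 u v w h h')
    · exact (U (hGv h).2 (hHv h').1).elim
    · exact Or.inr (Or.inr ⟨(hGv h).1, h2'⟩)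
    · exact (U (hGv h').1 (hHv h).2).elim
    · exact Or.inr (Or.inl (hWH.2.2.1 u v w h h'))
    · exact (U h1' (hHv h).2).elim
    · exact (U (hGv h').1 h2).elim
    · exact Or.inr (Or.inr ⟨h1, (hHv h').2⟩)
    · exact (U h1' h2).elim
  · -- no N
    rintro ⟨u, v, y, z, hu, hv, hy, hz, d1, d2, d3, d4, d5, d6, e1, e2, e3,
      n1, n2, n3, n4, n5, n6⟩
    have suy := sameSide hdisj hu hy (fun h => by
      rcases h with ⟨h1, h2⟩ | ⟨h1, h2⟩
      · exact n1 (Or.inr (Or.inr ⟨h1, h2⟩))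
      · exact n2 (Or.inr (Or.inr ⟨h2, h1⟩)))
    have suz := sameSide hdisj hu hz (fun h => by
      rcases h with ⟨h1, h2⟩ | ⟨h1, h2⟩
      · exact n3 (Or.inr (Or.inr ⟨h1, h2⟩))
      · exact n4 (Or.inr (Or.inr ⟨h2, h1⟩)))
    have svz := sameSide hdisj hv hz (fun h => by
      rcases h with ⟨h1, h2⟩ | ⟨h1, h2⟩
      · exact n5 (Or.inr (Or.inr ⟨h1, h2⟩))
      · exact n6 (Or.inr (Or.inr ⟨h2, h1⟩)))
    have hloc : ∀ {a b : ℕ}, (useq G H).lt a b →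
        (a ∈ G.verts ∧ b ∈ G.verts → G.lt a b) ∧ (a ∈ H.verts ∧ b ∈ H.verts → H.lt a b) := by
      rintro a b (h | h | ⟨h1, h2⟩)
      · exact ⟨fun _ => h, fun hm => (U (hGv h).1 hm.1).elim⟩
      · exact ⟨fun hm => (U hm.1 (hHv h).1).elim, fun _ => h⟩
      · exact ⟨fun hm => (U hm.2 h2).elim, fun hm => (U h1 hm.1).elim⟩
    rcases suy with ⟨huG, hyG⟩ | ⟨huH, hyH⟩
    · have hzG : z ∈ G.verts := by
        rcases suz with ⟨_, h⟩ | ⟨h, _⟩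
        · exact h
        · exact (U huG h).elim
      have hvG : v ∈ G.verts := by
        rcases svz with ⟨h, _⟩ | ⟨h1, h2⟩
        · exact h
        · exact (U hzG h2).elim
      exact hWG.2.2.2.2.1 ⟨u, v, y, z, huG, hvG, hyG, hzG, d1, d2, d3, d4, d5, d6,
        (hloc e1).1 ⟨huG, hvG⟩, (hloc e2).1 ⟨hyG, hvG⟩, (hloc e3).1 ⟨hyG, hzG⟩,
        fun h => n1 (Or.inl h), fun h => n2 (Or.inl h), fun h => n3 (Or.inl h),
        fun h => n4 (Or.inl h), fun h => n5 (Or.inl h), fun h => n6 (Or.inl h)⟩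
    · have hzH : z ∈ H.verts := by
        rcases suz with ⟨h, _⟩ | ⟨_, h⟩
        · exact (U h huH).elim
        · exact h
      have hvH : v ∈ H.verts := by
        rcases svz with ⟨h1, h2⟩ | ⟨h, _⟩
        · exact (U h2 hzH).elim
        · exact h
      exact hWH.2.2.2.2.1 ⟨u, v, y, z, huH, hvH, hyH, hzH, d1, d2, d3, d4, d5, d6,
        (hloc e1).2 ⟨huH, hvH⟩, (hloc e2).2 ⟨hyH, hvH⟩, (hloc e3).2 ⟨hyH, hzH⟩,
        fun h => n1 (Or.inr (Or.inl h)), fun h => n2 (Or.inr (Or.inl h)),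
        fun h => n3 (Or.inr (Or.inl h)), fun h => n4 (Or.inr (Or.inl h)),
        fun h => n5 (Or.inr (Or.inl h)), fun h => n6 (Or.inr (Or.inl h))⟩
  · -- no 3-color triangle
    rintro ⟨u, w, v, hu, hw, hv, d1, d2, d3, hno, hR, hs⟩
    obtain ⟨m1, m2, m3, m4⟩ := hno
    have suw := sameSide hdisj hu hw (fun h => by
      rcases h with ⟨h1, h2⟩ | ⟨h1, h2⟩
      · exact m3 (Or.inr (Or.inr ⟨h1, h2⟩))
      · exact m4 (Or.inr (Or.inr ⟨h2, h1⟩)))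
    rcases sideR hGm hHm hR with ⟨f1, hwG, hvG⟩ | ⟨f1, hwH, hvH⟩
    · have huG : u ∈ G.verts := by
        rcases suw with ⟨h, _⟩ | ⟨_, h⟩
        · exact h
        · exact (U hwG h).elim
      have hsG : G.lt u v ∨ G.lt v u := by
        rcases hs with (h | h | ⟨h1, h2⟩) | (h | h | ⟨h1, h2⟩)
        · exact Or.inl h
        · exact (U huG (hHv h).1).elim
        · exact (U hvG h2).elim
        · exact Or.inr h
        · exact (U hvG (hHv h).1).elim
        · exact (U huG h2).elim
      exact hWG.2.2.2.2.2 ⟨u, w, v, huG, hwG, hvG, d1, d2, d3,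
        ⟨fun h => m1 (Or.inl h), fun h => m2 (Or.inl h),
         fun h => m3 (Or.inl h), fun h => m4 (Or.inl h)⟩, f1, hsG⟩
    · have huH : u ∈ H.verts := by
        rcases suw with ⟨_, h⟩ | ⟨h, _⟩
        · exact (U h hwH).elim
        · exact h
      have hsH : H.lt u v ∨ H.lt v u := by
        rcases hs with (h | h | ⟨h1, h2⟩) | (h | h | ⟨h1, h2⟩)
        · exact (U (hGv h).1 huH).elim
        · exact Or.inl h
        · exact (U h1 huH).elim
        · exact (U (hGv h).1 hvH).elim
        · exact Or.inr h
        · exact (U h1 hvH).elim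
      exact hWH.2.2.2.2.2 ⟨u, w, v, huH, hwH, hvH, d1, d2, d3,
        ⟨fun h => m1 (Or.inr h), fun h => m2 (Or.inr h),
         fun h => m3 (Or.inr (Or.inl h)), fun h => m4 (Or.inr (Or.inl h))⟩, f1, hsH⟩

end
end RelWebCombo3

namespace RelWebMain
open MGraph RelWebAux RelWebAux2 RelWebSplit RelWebDir

/-- Restriction of a mixed graph to a finite vertex set. -/
def restrict (G : MGraph) (A : Finset ℕ) : MGraph where
  verts := A
  R := fun u v => G.R u v ∧ u ∈ A ∧ v ∈ A
  lt := fun u v => G.lt u v ∧ u ∈ A ∧ v ∈ A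

variable {G : MGraph}

lemma restrict_web (hW : G.IsRelWeb) {A : Finset ℕ} (hA : A ⊆ G.verts)
    (hne : A.Nonempty) : (restrict G A).IsRelWeb := by
  obtain ⟨⟨hsym, hirr, hirl, hex, hRv, hLv⟩, _, htr, hP4, hN, h3⟩ := hW
  refine ⟨⟨?_, ?_, ?_, ?_, ?_, ?_⟩, hne, ?_, ?_, ?_, ?_⟩
  · rintro u v ⟨h, h1, h2⟩; exact ⟨hsym u v h, h2, h1⟩
  · rintro v ⟨h, _⟩; exact hirr v h
  · rintro v ⟨h, _⟩; exact hirl v h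
  · rintro u v ⟨⟨h1, _⟩, ⟨h2, _⟩⟩; exact hex u v ⟨h1, h2⟩
  · rintro u v ⟨_, h1, h2⟩; exact ⟨h1, h2⟩
  · rintro u v ⟨_, h1, h2⟩; exact ⟨h1, h2⟩
  · rintro u v w ⟨h1, hu, hv⟩ ⟨h2, _, hw⟩; exact ⟨htr u v w h1 h2, hu, hw⟩
  · rintro ⟨w, x, y, z, hw, hx, hy, hz, d1, d2, d3, d4, d5, d6, e1, e2, e3, n1, n2, n3⟩
    exact hP4 ⟨w, x, y, z, hA hw, hA hx, hA hy, hA hz, d1, d2, d3, d4, d5, d6,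
      e1.1, e2.1, e3.1, fun h => n1 ⟨h, hw, hy⟩, fun h => n2 ⟨h, hw, hz⟩,
      fun h => n3 ⟨h, hx, hz⟩⟩
  · rintro ⟨u, v, y, z, hu, hv, hy, hz, d1, d2, d3, d4, d5, d6, e1, e2, e3,
      n1, n2, n3, n4, n5, n6⟩
    exact hN ⟨u, v, y, z, hA hu, hA hv, hA hy, hA hz, d1, d2, d3, d4, d5, d6,
      e1.1, e2.1, e3.1, fun h => n1 ⟨h, hu, hy⟩, fun h => n2 ⟨h, hy, hu⟩,
      fun h => n3 ⟨h, hu, hz⟩, fun h => n4 ⟨h, hz, hu⟩, fun h => n5 ⟨h, hv, hz⟩,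
      fun h => n6 ⟨h, hz, hv⟩⟩
  · rintro ⟨u, w, v, hu, hw, hv, d1, d2, d3, ⟨m1, m2, m3, m4⟩, hR, hs⟩
    refine h3 ⟨u, w, v, hA hu, hA hw, hA hv, d1, d2, d3,
      ⟨fun h => m1 ⟨h, hu, hw⟩, fun h => m2 ⟨h, hw, hu⟩,
       fun h => m3 ⟨h, hu, hw⟩, fun h => m4 ⟨h, hw, hu⟩⟩, hR.1, ?_⟩
    rcases hs with h | h
    · exact Or.inl h.1
    · exact Or.inr h.1

lemma graph_eq {K : MGraph} (hv : G.verts = K.verts)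
    (hR : ∀ u v, G.R u v ↔ K.R u v) (hlt : ∀ u v, G.lt u v ↔ K.lt u v) : G = K := by
  cases G; cases K
  simp only [MGraph.mk.injEq]
  refine ⟨hv, ?_, ?_⟩
  · funext u v; exact propext (hR u v)
  · funext u v; exact propext (hlt u v)

lemma eq_uparr (hG : G.IsMixed) {A B : Finset ℕ} (hun : A ∪ B = G.verts)
    (hcross : ∀ a ∈ A, ∀ b ∈ B, G.noEdge a b) :
    G = uparr (restrict G A) (restrict G B) := by
  apply graph_eq
  · exact hun.symm
  · intro u v
    constructor
    · intro h
      have hm := hG.2.2.2.2.1 u v h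
      rw [← hun] at hm
      rcases Finset.mem_union.mp hm.1 with h1 | h1 <;>
        rcases Finset.mem_union.mp hm.2 with h2 | h2
      · exact Or.inl ⟨h, h1, h2⟩
      · exact absurd h (hcross u h1 v h2).1
      · exact absurd h (hcross v h2 u h1).2.1
      · exact Or.inr ⟨h, h1, h2⟩
    · rintro (⟨h, _⟩ | ⟨h, _⟩) <;> exact h
  · intro u v
    constructor
    · intro h
      have hm := hG.2.2.2.2.2 u v h
      rw [← hun] at hm
      rcases Finset.mem_union.mp hm.1 with h1 | h1 <;>
        rcases Finset.mem_union.mp hm.2 with h2 | h2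
      · exact Or.inl ⟨h, h1, h2⟩
      · exact absurd h (hcross u h1 v h2).2.2.1
      · exact absurd h (hcross v h2 u h1).2.2.2
      · exact Or.inr ⟨h, h1, h2⟩
    · rintro (⟨h, _⟩ | ⟨h, _⟩) <;> exact h

lemma eq_utens (hG : G.IsMixed) {A B : Finset ℕ} (hun : A ∪ B = G.verts)
    (hcross : ∀ a ∈ A, ∀ b ∈ B, G.R a b) :
    G = utens (restrict G A) (restrict G B) := by
  apply graph_eq
  · exact hun.symm
  · intro u v
    constructor
    · intro h
      have hm := hG.2.2.2.2.1 u v h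
      rw [← hun] at hm
      rcases Finset.mem_union.mp hm.1 with h1 | h1 <;>
        rcases Finset.mem_union.mp hm.2 with h2 | h2
      · exact Or.inl ⟨h, h1, h2⟩
      · exact Or.inr (Or.inr (Or.inl ⟨h1, h2⟩))
      · exact Or.inr (Or.inr (Or.inr ⟨h1, h2⟩))
      · exact Or.inr (Or.inl ⟨h, h1, h2⟩)
    · rintro (⟨h, _⟩ | ⟨h, _⟩ | ⟨h1, h2⟩ | ⟨h1, h2⟩)
      · exact h
      · exact h
      · exact hcross u h1 v h2
      · exact hG.1 v u (hcross v h2 u h1)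
  · intro u v
    constructor
    · intro h
      have hm := hG.2.2.2.2.2 u v h
      rw [← hun] at hm
      rcases Finset.mem_union.mp hm.1 with h1 | h1 <;>
        rcases Finset.mem_union.mp hm.2 with h2 | h2
      · exact Or.inl ⟨h, h1, h2⟩
      · exact absurd ⟨hcross u h1 v h2, h⟩ (hG.2.2.2.1 u v)
      · exact absurd ⟨hG.1 v u (hcross v h2 u h1), h⟩ (hG.2.2.2.1 u v)
      · exact Or.inr ⟨h, h1, h2⟩
    · rintro (⟨h, _⟩ | ⟨h, _⟩) <;> exact h

lemma eq_useq (hW : G.IsRelWeb) {A B : Finset ℕ} (hun : A ∪ B = G.verts)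
    (hcross : ∀ a ∈ A, ∀ b ∈ B, G.lt a b) :
    G = useq (restrict G A) (restrict G B) := by
  have hG := hW.1
  have htr := hW.2.2.1
  apply graph_eq
  · exact hun.symm
  · intro u v
    constructor
    · intro h
      have hm := hG.2.2.2.2.1 u v h
      rw [← hun] at hm
      rcases Finset.mem_union.mp hm.1 with h1 | h1 <;>
        rcases Finset.mem_union.mp hm.2 with h2 | h2
      · exact Or.inl ⟨h, h1, h2⟩
      · exact absurd ⟨h, hcross u h1 v h2⟩ (hG.2.2.2.1 u v)
      · exact absurd ⟨hG.1 u v h, hcross v h2 u h1⟩ (hG.2.2.2.1 v u)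
      · exact Or.inr ⟨h, h1, h2⟩
    · rintro (⟨h, _⟩ | ⟨h, _⟩) <;> exact h
  · intro u v
    constructor
    · intro h
      have hm := hG.2.2.2.2.2 u v h
      rw [← hun] at hm
      rcases Finset.mem_union.mp hm.1 with h1 | h1 <;>
        rcases Finset.mem_union.mp hm.2 with h2 | h2
      · exact Or.inl ⟨h, h1, h2⟩
      · exact Or.inr (Or.inr ⟨h1, h2⟩)
      · exact absurd (htr u v u h (hcross v h2 u h1)) (hG.2.2.1 u)
      · exact Or.inr (Or.inl ⟨h, h1, h2⟩)
    · rintro (⟨h, _⟩ | ⟨h, _⟩ | ⟨h1, h2⟩)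
      · exact h
      · exact h
      · exact hcross u h1 v h2

/-- The hard direction: every relation web is constructible. -/
lemma web_constructible : ∀ (n : ℕ) (G : MGraph), G.verts.card = n → G.IsRelWeb →
    G.Constructible := by
  intro n
  induction n using Nat.strong_induction_on with
  | _ n IH =>
  intro G hcard hW
  have hG := hW.1
  by_cases hn : n ≤ 1
  · -- single vertex
    obtain ⟨x, hx⟩ := hW.2.1
    have h1 : G.verts.card = 1 := le_antisymm (hcard ▸ hn) (Finset.card_pos.mpr ⟨x, hx⟩)
    obtain ⟨m, hm⟩ := Finset.card_eq_one.mp h1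
    have hGeq : G = ⟨{m}, fun _ _ => False, fun _ _ => False⟩ := by
      apply graph_eq
      · exact hm
      · intro u v
        simp only [iff_false]
        intro h
        have hmem := hG.2.2.2.2.1 u v h
        rw [hm] at hmem
        simp only [Finset.mem_singleton] at hmem
        rw [hmem.1, hmem.2] at h
        exact hG.2.1 m h
      · intro u v
        simp only [iff_false]
        intro h
        have hmem := hG.2.2.2.2.2 u v h
        rw [hm] at hmem
        simp only [Finset.mem_singleton] at hmem
        rw [hmem.1, hmem.2] at h
        exact hG.2.2.1 m h
    rw [hGeq]
    exact Constructible.single m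
  · -- at least two vertices : split
    push_neg at hn
    obtain ⟨A, B, hAne, hBne, hdisj, hun, k, hcross⟩ :=
      split_lemma hW n G.verts hn hcard (subset_refl _)
    have hAsub : A ⊆ G.verts := hun ▸ Finset.subset_union_left
    have hBsub : B ⊆ G.verts := hun ▸ Finset.subset_union_right
    have hcardAB : A.card + B.card = n := by
      rw [← hcard, ← hun, Finset.card_union_of_disjoint hdisj]
    have hcardA : A.card < n := by
      have := Finset.card_pos.mpr hBne; omega
    have hcardB : B.card < n := by
      have := Finset.card_pos.mpr hAne; omega
    obtain ⟨a₀, ha₀⟩ := hAne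
    obtain ⟨b₀, hb₀⟩ := hBne
    have hk := hcross a₀ ha₀ b₀ hb₀
    rcases col_cases G a₀ b₀ with h | h | h
    · -- k = 0 : parallel split
      rw [hk] at h; subst h
      have hcE : ∀ a ∈ A, ∀ b ∈ B, G.noEdge a b := fun a ha b hb =>
        col_noEdge hG (hcross a ha b hb)
      rw [eq_uparr hG hun hcE]
      exact Constructible.parr
        (IH A.card hcardA _ rfl (restrict_web hW hAsub ⟨a₀, ha₀⟩))
        (IH B.card hcardB _ rfl (restrict_web hW hBsub ⟨b₀, hb₀⟩)) hdisj
    · -- k = 1 : tensor split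
      rw [hk] at h; subst h
      have hcE : ∀ a ∈ A, ∀ b ∈ B, G.R a b := fun a ha b hb =>
        col_eq_one.mp (hcross a ha b hb)
      rw [eq_utens hG hun hcE]
      exact Constructible.tens
        (IH A.card hcardA _ rfl (restrict_web hW hAsub ⟨a₀, ha₀⟩))
        (IH B.card hcardB _ rfl (restrict_web hW hBsub ⟨b₀, hb₀⟩)) hdisj
    · -- k = 2 : order split, first make it directed
      rw [hk] at h; subst h
      have hcE : ∀ a ∈ A, ∀ b ∈ B, G.lt a b ∨ G.lt b a := fun a ha b hb =>
        (col_eq_two' hG).mp (hcross a ha b hb)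
      obtain ⟨A', B', hA'ne, hB'ne, hdisj', hun', hlt'⟩ :=
        directed_split hW (subset_refl G.verts) ⟨a₀, ha₀⟩ ⟨b₀, hb₀⟩ hdisj hun hcE
      have hA'sub : A' ⊆ G.verts := hun' ▸ Finset.subset_union_left
      have hB'sub : B' ⊆ G.verts := hun' ▸ Finset.subset_union_right
      have hcardA' : A'.card < n := by
        have h1 : A'.card + B'.card = n := by
          rw [← hcard, ← hun', Finset.card_union_of_disjoint hdisj']
        have := Finset.card_pos.mpr hB'ne; omega
      have hcardB' : B'.card < n := by
        have h1 : A'.card + B'.card = n := by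
          rw [← hcard, ← hun', Finset.card_union_of_disjoint hdisj']
        have := Finset.card_pos.mpr hA'ne; omega
      rw [eq_useq hW hun' hlt']
      exact Constructible.seq
        (IH A'.card hcardA' _ rfl (restrict_web hW hA'sub hA'ne))
        (IH B'.card hcardB' _ rfl (restrict_web hW hB'sub hB'ne)) hdisj'

/-- The easy direction: constructible graphs are relation webs. -/
lemma constructible_web {G : MGraph} (h : G.Constructible) : G.IsRelWeb := by
  induction h with
  | single n =>
    refine ⟨⟨?_, ?_, ?_, ?_, ?_, ?_⟩, ⟨n, Finset.mem_singleton_self n⟩, ?_, ?_, ?_, ?_⟩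
    · rintro _ _ h; exact h
    · rintro _ h; exact h
    · rintro _ h; exact h
    · rintro _ _ ⟨h, _⟩; exact h
    · rintro _ _ h; exact h.elim
    · rintro _ _ h; exact h.elim
    · rintro _ _ _ h; exact h.elim
    · rintro ⟨w, x, y, z, hw, hx, hy, hz, d1, _⟩
      simp only [Finset.mem_singleton] at hw hx
      exact d1 (hw.trans hx.symm)
    · rintro ⟨u, v, y, z, hu, hv, hy, hz, d1, _⟩
      simp only [Finset.mem_singleton] at hu hv
      exact d1 (hu.trans hv.symm)
    · rintro ⟨u, w, v, hu, hw, hv, d1, _⟩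
      simp only [Finset.mem_singleton] at hu hw
      exact d1 (hu.trans hw.symm)
  | parr _ _ hd ihG ihH => exact RelWebCombo.web_uparr ihG ihH hd
  | tens _ _ hd ihG ihH => exact RelWebCombo2.web_utens ihG ihH hd
  | seq _ _ hd ihG ihH => exact RelWebCombo3.web_useq ihG ihH hd

end RelWebMain

/-- A mixed graph is a relation web if and only if it can be constructed
from single vertices using the three operations. -/
theorem relweb_iff_constructible (G : MGraph) (hG : G.IsMixed) :
    G.IsRelWeb ↔ MGraph.Constructible G :=
  ⟨fun h => RelWebMain.web_constructible G.verts.card G rfl h,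
   fun h => RelWebMain.constructible_web h⟩
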